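/- arXiv:2212.06409 — 9 statements merged into one kernel-verified Lean document; each statement's English description precedes it below -/
import Mathlib

section
/- Let E be a real reflexive Banach space and let f : E → ℝ be uniformly Fréchet differentiable and bounded on bounded subsets of E. Then f is uniformly continuous on bounded subsets of E, and the gradient map ∇f : E → E* is uniformly continuous on bounded subsets of E from the strong topology of E to the strong topology of E*. -/
open Filter Topology Set Bornology

/-- Let `E` be a real reflexive Banach space and `f : E → ℝ` be uniformly
Fréchet differentiable and bounded on bounded subsets of `E` (with Gâteaux/Fréchet gradient
`f' : E → E*`).  Then `f` is uniformly continuous on bounded subsets of `E` and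
`∇f = f'` is uniformly continuous on bounded subsets of `E` from the strong topology of `E`
to the strong topology of `E*`. -/
theorem stmt0 {E : Type*} [NormedAddCommGroup E] [NormedSpace ℝ E] [CompleteSpace E]
    (hrefl : Function.Surjective (NormedSpace.inclusionInDoubleDual ℝ E))
    (f : E → ℝ) (f' : E → StrongDual ℝ E)
    (hgrad : ∀ x y : E,
      Tendsto (fun t : ℝ => (f (x + t • y) - f x) / t) (𝓝[>] (0 : ℝ)) (𝓝 (f' x y)))
    (hunif : ∀ B : Set E, IsBounded B → ∀ ε > (0 : ℝ), ∃ δ > (0 : ℝ),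
      ∀ t : ℝ, 0 < t → t < δ → ∀ x ∈ B, ∀ y : E, ‖y‖ = 1 →
        |(f (x + t • y) - f x) / t - f' x y| < ε)
    (hbdd : ∀ B : Set E, IsBounded B → ∃ M : ℝ, ∀ x ∈ B, |f x| ≤ M) :
    (∀ B : Set E, IsBounded B → UniformContinuousOn f B) ∧
    (∀ B : Set E, IsBounded B → UniformContinuousOn f' B) := by
  -- Step 1: `f'` is bounded on bounded sets (on unit vectors).
  have hfb : ∀ B : Set E, IsBounded B → ∃ K : ℝ, 0 ≤ K ∧
      ∀ x ∈ B, ∀ y : E, ‖y‖ = 1 → |f' x y| ≤ K := by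
    intro B hB
    obtain ⟨r, hr⟩ := hB.subset_closedBall 0
    set R := max r 0 with hR
    have hRB : B ⊆ Metric.closedBall 0 (R + 1) := fun x hx => by
      simp only [Metric.mem_closedBall, dist_zero_right]
      have h1 : ‖x‖ ≤ r := by simpa [dist_zero_right] using hr hx
      have h2 : r ≤ R := le_max_left _ _
      linarith
    obtain ⟨M, hM⟩ := hbdd (Metric.closedBall 0 (R + 1)) Metric.isBounded_closedBall
    obtain ⟨δ, hδ, hδ'⟩ := hunif B hB 1 one_pos
    set t := min (δ / 2) 1 with ht
    have ht0 : 0 < t := lt_min (by linarith) one_pos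
    have htδ : t < δ := lt_of_le_of_lt (min_le_left _ _) (by linarith)
    have ht1 : t ≤ 1 := min_le_right _ _
    have hM0 : 0 ≤ M := by
      have h0 : (0 : E) ∈ Metric.closedBall (0 : E) (R + 1) := by
        simp only [Metric.mem_closedBall, dist_self]
        have : (0 : ℝ) ≤ R := le_max_right _ _
        linarith
      exact le_trans (abs_nonneg _) (hM 0 h0)
    refine ⟨2 * M / t + 1, by positivity, ?_⟩
    intro x hx y hy
    have hxmem : x ∈ Metric.closedBall (0 : E) (R + 1) := hRB hx
    have hxy : x + t • y ∈ Metric.closedBall (0 : E) (R + 1) := by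
      simp only [Metric.mem_closedBall, dist_zero_right]
      have hxn : ‖x‖ ≤ R := by
        have : ‖x‖ ≤ r := by simpa [dist_zero_right] using hr hx
        exact le_trans this (le_max_left _ _)
      calc ‖x + t • y‖ ≤ ‖x‖ + ‖t • y‖ := norm_add_le _ _
        _ = ‖x‖ + t := by rw [norm_smul, hy, Real.norm_eq_abs, abs_of_pos ht0, mul_one]
        _ ≤ R + 1 := by linarith
    have h1 := hδ' t ht0 htδ x hx y hy
    have h2 : |(f (x + t • y) - f x) / t| ≤ 2 * M / t := by
      rw [abs_div, abs_of_pos ht0]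
      gcongr
      calc |f (x + t • y) - f x| ≤ |f (x + t • y)| + |f x| := abs_sub _ _
        _ ≤ M + M := add_le_add (hM _ hxy) (hM _ hxmem)
        _ = 2 * M := by ring
    calc |f' x y| = |(f (x + t • y) - f x) / t - ((f (x + t • y) - f x) / t - f' x y)| := by
          ring_nf
      _ ≤ |(f (x + t • y) - f x) / t| + |(f (x + t • y) - f x) / t - f' x y| := abs_sub _ _
      _ ≤ 2 * M / t + 1 := add_le_add h2 (le_of_lt h1)
  -- Step 2: `f` is uniformly continuous on bounded sets, quantitative form.
  have hucf : ∀ B : Set E, IsBounded B → ∀ ε > (0 : ℝ), ∃ η > (0 : ℝ),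
      ∀ x ∈ B, ∀ z ∈ B, dist x z < η → |f x - f z| < ε := by
    intro B hB ε hε
    obtain ⟨K, hK0, hK⟩ := hfb B hB
    obtain ⟨δ₁, hδ₁, hδ₁'⟩ := hunif B hB 1 one_pos
    refine ⟨min δ₁ (ε / (K + 2)), lt_min hδ₁ (by positivity), ?_⟩
    intro x hx z hz hxz
    rcases eq_or_ne z x with rfl | hne
    · simpa using hε
    · set s := ‖z - x‖ with hs
      have hs0 : 0 < s := by
        rw [hs]; exact norm_pos_iff.mpr (sub_ne_zero.mpr hne)
      have hsd : s = dist x z := by rw [hs, dist_eq_norm, norm_sub_rev]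
      set y := s⁻¹ • (z - x) with hy
      have hyn : ‖y‖ = 1 := by
        rw [hy, norm_smul, norm_inv, Real.norm_eq_abs, abs_of_pos hs0, ← hs,
          inv_mul_cancel₀ (ne_of_gt hs0)]
      have hxsy : x + s • y = z := by
        rw [hy, smul_smul, mul_inv_cancel₀ (ne_of_gt hs0), one_smul, add_sub_cancel]
      have hsδ : s < δ₁ := by rw [hsd]; exact hxz.trans_le (min_le_left _ _)
      have hsε : s < ε / (K + 2) := by rw [hsd]; exact hxz.trans_le (min_le_right _ _)
      have h1 := hδ₁' s hs0 hsδ x hx y hyn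
      rw [hxsy] at h1
      have h2 : |f' x y| ≤ K := hK x hx y hyn
      have h3 : |(f z - f x) / s| < K + 1 := by
        calc |(f z - f x) / s| ≤ |(f z - f x) / s - f' x y| + |f' x y| := by
              have := abs_add_le ((f z - f x) / s - f' x y) (f' x y)
              simpa using this
          _ < 1 + K := add_lt_add_of_lt_of_le h1 h2
          _ = K + 1 := by ring
      have h4 : |f z - f x| < (K + 1) * s := by
        have := (abs_div (f z - f x) s).symm ▸ h3
        rw [abs_div, abs_of_pos hs0] at h3
        calc |f z - f x| = |f z - f x| / s * s := by field_simp
          _ < (K + 1) * s := by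
              apply mul_lt_mul_of_pos_right h3 hs0
      have h5 : (K + 1) * s < ε := by
        have := mul_lt_mul_of_pos_left hsε (show (0:ℝ) < K + 1 by linarith)
        have h6 : (K + 1) * (ε / (K + 2)) < ε := by
          rw [div_eq_mul_inv]
          have hK2 : (0:ℝ) < K + 2 := by linarith
          rw [show (K + 1) * (ε * (K + 2)⁻¹) = ε * ((K + 1) / (K + 2)) by field_simp]
          nlinarith [(div_lt_one hK2).mpr (show K + 1 < K + 2 by linarith)]
        linarith
      rw [abs_sub_comm]
      linarith
  constructor
  · intro B hB
    rw [Metric.uniformContinuousOn_iff]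
    intro ε hε
    obtain ⟨η, hη, hη'⟩ := hucf B hB ε hε
    exact ⟨η, hη, fun x hx z hz h => by rw [Real.dist_eq]; exact hη' x hx z hz h⟩
  · intro B hB
    rw [Metric.uniformContinuousOn_iff]
    intro ε hε
    obtain ⟨r, hr⟩ := hB.subset_closedBall 0
    set R := max r 0 with hR
    have hBR : B ⊆ Metric.closedBall 0 (R + 1) := fun x hx => by
      simp only [Metric.mem_closedBall, dist_zero_right]
      have : ‖x‖ ≤ r := by simpa [dist_zero_right] using hr hx
      have := le_max_left r 0
      linarith
    obtain ⟨δ, hδ, hδ'⟩ := hunif B hB (ε / 4) (by positivity)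
    set t := min (δ / 2) 1 with ht
    have ht0 : 0 < t := lt_min (by linarith) one_pos
    have htδ : t < δ := lt_of_le_of_lt (min_le_left _ _) (by linarith)
    have ht1 : t ≤ 1 := min_le_right _ _
    obtain ⟨η, hη, hη'⟩ := hucf (Metric.closedBall (0:E) (R + 1)) Metric.isBounded_closedBall
      (ε * t / 8) (by positivity)
    refine ⟨η, hη, ?_⟩
    intro x hx z hz hxz
    -- key pointwise estimate on unit vectors
    have key : ∀ y : E, ‖y‖ = 1 → |f' x y - f' z y| ≤ 3 * ε / 4 := by
      intro y hy
      have hmem : ∀ w ∈ B, w + t • y ∈ Metric.closedBall (0:E) (R + 1) := by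
        intro w hw
        simp only [Metric.mem_closedBall, dist_zero_right]
        have hwn : ‖w‖ ≤ R := by
          have : ‖w‖ ≤ r := by simpa [dist_zero_right] using hr hw
          exact this.trans (le_max_left _ _)
        calc ‖w + t • y‖ ≤ ‖w‖ + ‖t • y‖ := norm_add_le _ _
          _ = ‖w‖ + t := by rw [norm_smul, hy, Real.norm_eq_abs, abs_of_pos ht0, mul_one]
          _ ≤ R + 1 := by linarith
      have h1 := hδ' t ht0 htδ x hx y hy
      have h2 := hδ' t ht0 htδ z hz y hy
      have h3 : |f (x + t • y) - f (z + t • y)| < ε * t / 8 := by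
        apply hη' _ (hmem x hx) _ (hmem z hz)
        rwa [dist_add_right]
      have h4 : |f x - f z| < ε * t / 8 := hη' x (hBR hx) z (hBR hz) hxz
      have hmid : |(f (x + t • y) - f x) / t - (f (z + t • y) - f z) / t| ≤ ε / 4 := by
        rw [div_sub_div_same, abs_div, abs_of_pos ht0]
        rw [div_le_iff₀ ht0]
        have : |f (x + t • y) - f x - (f (z + t • y) - f z)|
            ≤ |f (x + t • y) - f (z + t • y)| + |f x - f z| := by
          have := abs_sub (f (x + t • y) - f (z + t • y)) (f x - f z)
          calc |f (x + t • y) - f x - (f (z + t • y) - f z)|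
              = |(f (x + t • y) - f (z + t • y)) - (f x - f z)| := by ring_nf
            _ ≤ |f (x + t • y) - f (z + t • y)| + |f x - f z| := abs_sub _ _
        nlinarith
      calc |f' x y - f' z y|
          ≤ |f' x y - (f (x + t • y) - f x) / t|
            + |(f (x + t • y) - f x) / t - (f (z + t • y) - f z) / t|
            + |(f (z + t • y) - f z) / t - f' z y| := by
            have h5 := abs_sub_le (f' x y) ((f (x + t • y) - f x) / t) (f' z y)
            have h6 := abs_sub_le ((f (x + t • y) - f x) / t)
              ((f (z + t • y) - f z) / t) (f' z y)
            linarith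
        _ ≤ ε / 4 + ε / 4 + ε / 4 := by
            refine add_le_add (add_le_add ?_ hmid) ?_
            · rw [abs_sub_comm]; exact le_of_lt h1
            · exact le_of_lt h2
        _ = 3 * ε / 4 := by ring
    have hnorm : ‖f' x - f' z‖ ≤ 3 * ε / 4 := by
      apply ContinuousLinearMap.opNorm_le_bound _ (by positivity)
      intro y
      rcases eq_or_ne y 0 with rfl | hy0
      · simp
      · have hyn : ‖y‖ ≠ 0 := norm_ne_zero_iff.mpr hy0
        set u := ‖y‖⁻¹ • y with hu
        have hun : ‖u‖ = 1 := by
          rw [hu, norm_smul, norm_inv, norm_norm, inv_mul_cancel₀ hyn]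
        have hyu : y = ‖y‖ • u := by
          rw [hu, smul_smul, mul_inv_cancel₀ hyn, one_smul]
        have := key u hun
        calc ‖(f' x - f' z) y‖ = ‖(f' x - f' z) (‖y‖ • u)‖ := by rw [← hyu]
          _ = ‖y‖ * ‖(f' x - f' z) u‖ := by
              rw [map_smul, norm_smul, norm_norm]
          _ = ‖y‖ * |f' x u - f' z u| := by
              simp [ContinuousLinearMap.sub_apply, Real.norm_eq_abs]
          _ ≤ ‖y‖ * (3 * ε / 4) := by
              exact mul_le_mul_of_nonneg_left this (norm_nonneg _)
          _ = 3 * ε / 4 * ‖y‖ := by ring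
    rw [dist_eq_norm]
    linarith
end

section
/- Let E be a real reflexive Banach space, let f : E → (−∞,+∞] be a proper, lower semicontinuous convex function which is Gâteaux differentiable on int dom f, and let x ∈ int dom f. Then the following are equivalent: (i) f is totally convex at x; (ii) for every sequence {y_n} ⊆ dom f, if D_f(y_n, x) → 0 then ‖y_n − x‖ → 0. -/
open Filter Topology Set Bornology

/-- The Bregman distance `D_f(y,x) =f(y) − f(x) − ⟨∇f(x), y − x⟩` associated with an
extended-real-valued function `f` and a gradient map `f'`, with values in `EReal`. -/
noncomputable def BregmanDistE {E : Type*} [NormedAddCommGroup E] [NormedSpace ℝ E]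
    (f : E → EReal) (f' : E → StrongDual ℝ E) (y x : E) : EReal :=
  f y - f x - ((f' x (y - x) : ℝ) : EReal)

/-- Let `E` be a real reflexive Banach space, `f : E → (−∞,+∞]` a proper lower
semicontinuous convex function which is Gâteaux differentiable on `int dom f`, and
`x ∈ int dom f`.  TFAE: (i) `f` is totally convex at `x` (the modulus of total convexity
`v_f(x,t) = inf {D_f(y,x) : y ∈ dom f, ‖y − x‖ = t}` is positive for every `t > 0`);
(ii) for every sequence `{y_n} ⊆ dom f`, `D_f(y_n,x) → 0` implies `‖y_n − x‖ → 0`. -/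
theorem stmt3 {E : Type*} [NormedAddCommGroup E] [NormedSpace ℝ E] [CompleteSpace E]
    (hrefl : Function.Surjective (NormedSpace.inclusionInDoubleDual ℝ E))
    (f : E → EReal)
    (hnebot : ∀ x : E, f x ≠ ⊥)
    (hproper : ∃ x : E, f x ≠ ⊤)
    (hlsc : LowerSemicontinuous f)
    (hconv : ∀ x y : E, ∀ a b : ℝ, 0 ≤ a → 0 ≤ b → a + b = 1 →
      f (a • x + b • y) ≤ (a : EReal) * f x + (b : EReal) * f y)
    (f' : E → StrongDual ℝ E)
    (hgrad : ∀ z ∈ interior {w : E | f w ≠ ⊤}, ∀ y : E,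
      Tendsto (fun t : ℝ => ((f (z + t • y)).toReal - (f z).toReal) / t)
        (𝓝[>] (0 : ℝ)) (𝓝 (f' z y)))
    (x : E) (hx : x ∈ interior {w : E | f w ≠ ⊤}) :
    (∀ t : ℝ, 0 < t →
      (0 : EReal) < ⨅ (y : E) (_ : f y ≠ ⊤ ∧ ‖y - x‖ = t), BregmanDistE f f' y x)
    ↔
    (∀ y : ℕ → E, (∀ n, f (y n) ≠ ⊤) →
      Tendsto (fun n => BregmanDistE f f' (y n) x) atTop (𝓝 (0 : EReal)) →
      Tendsto (fun n => ‖y n - x‖) atTop (𝓝 (0 : ℝ))) := by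
  have hxt : f x ≠ ⊤ := interior_subset hx
  set fx := (f x).toReal with hfxdef
  have hfxe : f x = (fx : EReal) := (EReal.coe_toReal hxt (hnebot x)).symm
  -- convexity along segments
  have key0' : ∀ y : E, f y ≠ ⊤ → ∀ c : ℝ, 0 < c → c ≤ 1 →
      f (x + c • (y - x)) ≠ ⊤ ∧
      (f (x + c • (y - x))).toReal ≤ (1 - c) * fx + c * (f y).toReal := by
    intro y hy c hc hc1
    have h := hconv x y (1 - c) c (by linarith) hc.le (by ring)
    have heq : (1 - c) • x + c • y = x + c • (y - x) := by
      rw [sub_smul, one_smul, smul_sub]; abel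
    obtain ⟨fy, hfy⟩ : ∃ r : ℝ, f y = (r : EReal) :=
      ⟨(f y).toReal, (EReal.coe_toReal hy (hnebot y)).symm⟩
    rw [heq, hfxe, hfy, ← EReal.coe_mul, ← EReal.coe_mul, ← EReal.coe_add] at h
    have hnt : f (x + c • (y - x)) ≠ ⊤ := by
      intro hT; rw [hT] at h; exact EReal.coe_ne_top _ (top_le_iff.1 h)
    refine ⟨hnt, ?_⟩
    have := EReal.toReal_le_toReal h (hnebot _) (EReal.coe_ne_top _)
    rw [EReal.toReal_coe] at this
    rw [hfy, EReal.toReal_coe]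
    exact this
  -- subgradient inequality
  have keyA : ∀ y : E, f y ≠ ⊤ → f' x (y - x) ≤ (f y).toReal - fx := by
    intro y hy
    have hlim := hgrad x hx (y - x)
    refine le_of_tendsto hlim ?_
    filter_upwards [Ioc_mem_nhdsGT_of_mem (left_mem_Ico.2 one_pos)] with t ht
    obtain ⟨hne, hle⟩ := key0' y hy t ht.1 ht.2
    rw [div_le_iff₀ ht.1]
    have : (1 - t) * fx + t * (f y).toReal - fx = ((f y).toReal - fx) * t := by ring
    linarith
  -- real versions
  have keyD : ∀ y : E, f y ≠ ⊤ → BregmanDistE f f' y x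
      = (((f y).toReal - fx - f' x (y - x) : ℝ) : EReal) := by
    intro y hy
    obtain ⟨fy, hfy⟩ : ∃ r : ℝ, f y = (r : EReal) :=
      ⟨(f y).toReal, (EReal.coe_toReal hy (hnebot y)).symm⟩
    simp only [BregmanDistE, hfy, hfxe, EReal.toReal_coe, ← EReal.coe_sub]
  have keyNonneg : ∀ y : E, f y ≠ ⊤ → 0 ≤ (f y).toReal - fx - f' x (y - x) := by
    intro y hy; have := keyA y hy; linarith
  have keyScale : ∀ y : E, f y ≠ ⊤ → ∀ c : ℝ, 0 < c → c ≤ 1 →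
      (f (x + c • (y - x))).toReal - fx - f' x ((x + c • (y - x)) - x)
        ≤ c * ((f y).toReal - fx - f' x (y - x)) := by
    intro y hy c hc hc1
    have hle := (key0' y hy c hc hc1).2
    have hl : f' x ((x + c • (y - x)) - x) = c * f' x (y - x) := by
      rw [add_sub_cancel_left, map_smul]; rfl
    rw [hl]
    have : c * ((f y).toReal - fx - f' x (y - x)) + fx + c * f' x (y - x)
        = (1 - c) * fx + c * (f y).toReal := by ring
    linarith
  -- comparison with the modulus
  have keyComp : ∀ t : ℝ, 0 < t → ∀ y : E, f y ≠ ⊤ → t ≤ ‖y - x‖ →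
      (⨅ (y : E) (_ : f y ≠ ⊤ ∧ ‖y - x‖ = t), BregmanDistE f f' y x)
        ≤ BregmanDistE f f' y x := by
    intro t ht y hy hty
    have hs : 0 < ‖y - x‖ := lt_of_lt_of_le ht hty
    set c := t / ‖y - x‖ with hcdef
    have hc : 0 < c := div_pos ht hs
    have hc1 : c ≤ 1 := (div_le_one hs).2 hty
    set z := x + c • (y - x) with hzdef
    have hz : f z ≠ ⊤ := (key0' y hy c hc hc1).1
    have hnz : ‖z - x‖ = t := by
      rw [hzdef, add_sub_cancel_left, norm_smul, Real.norm_eq_abs, abs_of_pos hc,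
        hcdef, div_mul_cancel₀ _ hs.ne']
    have h1 : (⨅ (y : E) (_ : f y ≠ ⊤ ∧ ‖y - x‖ = t), BregmanDistE f f' y x)
        ≤ BregmanDistE f f' z x := iInf_le_of_le z (iInf_le _ ⟨hz, hnz⟩)
    refine h1.trans ?_
    rw [keyD z hz, keyD y hy]
    have h2 := keyScale y hy c hc hc1
    have h3 : c * ((f y).toReal - fx - f' x (y - x)) ≤ (f y).toReal - fx - f' x (y - x) := by
      nlinarith [keyNonneg y hy]
    exact_mod_cast (h2.trans h3)
  constructor
  · -- (i) → (ii)
    intro h y hy hD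
    rw [Metric.tendsto_atTop]
    intro ε hε
    have hv := h ε hε
    have hev : ∀ᶠ n in atTop, BregmanDistE f f' (y n) x
        < ⨅ (y : E) (_ : f y ≠ ⊤ ∧ ‖y - x‖ = ε), BregmanDistE f f' y x :=
      hD.eventually_lt_const hv
    obtain ⟨N, hN⟩ := eventually_atTop.1 hev
    refine ⟨N, fun n hn => ?_⟩
    rw [Real.dist_eq, sub_zero, abs_of_nonneg (norm_nonneg _)]
    by_contra hcon
    push_neg at hcon
    have := keyComp ε hε (y n) (hy n) hcon
    exact lt_irrefl _ (this.trans_lt (hN n hn))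
  · -- (ii) → (i)
    intro h t ht
    by_contra hcon
    push_neg at hcon
    have hge : ∀ (y : E), (f y ≠ ⊤ ∧ ‖y - x‖ = t) →
        (0 : EReal) ≤ BregmanDistE f f' y x := by
      intro y hy
      rw [keyD y hy.1]
      exact_mod_cast keyNonneg y hy.1
    have hinf0 : (⨅ (y : E) (_ : f y ≠ ⊤ ∧ ‖y - x‖ = t), BregmanDistE f f' y x) = 0 :=
      le_antisymm hcon (le_iInf₂ hge)
    have hex : ∀ n : ℕ, ∃ z : E, (f z ≠ ⊤ ∧ ‖z - x‖ = t) ∧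
        BregmanDistE f f' z x < ((1 / (n + 1) : ℝ) : EReal) := by
      intro n
      have hb : (⨅ (y : E) (_ : f y ≠ ⊤ ∧ ‖y - x‖ = t), BregmanDistE f f' y x)
          < ((1 / (n + 1) : ℝ) : EReal) := by
        rw [hinf0]
        exact_mod_cast (by positivity : (0 : ℝ) < 1 / (n + 1))
      obtain ⟨z, hz⟩ := iInf_lt_iff.1 hb
      obtain ⟨hc, hlt⟩ := iInf_lt_iff.1 hz
      exact ⟨z, hc, hlt⟩
    choose y hy1 hy2 using hex
    have hupper : Tendsto (fun n : ℕ => ((1 / (n + 1) : ℝ) : EReal)) atTop (𝓝 (0 : EReal)) := by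
      rw [show ((0 : EReal)) = ((0 : ℝ) : EReal) by simp]
      exact (EReal.tendsto_coe).2 tendsto_one_div_add_atTop_nhds_zero_nat
    have hDt : Tendsto (fun n => BregmanDistE f f' (y n) x) atTop (𝓝 (0 : EReal)) :=
      tendsto_of_tendsto_of_tendsto_of_le_of_le tendsto_const_nhds hupper
        (fun n => hge _ (hy1 n)) (fun n => (hy2 n).le)
    have hlim := h y (fun n => (hy1 n).1) hDt
    have heq : (fun n => ‖y n - x‖) = fun _ : ℕ => t := funext fun n => (hy1 n).2
    rw [heq] at hlim
    exact ht.ne' (tendsto_nhds_unique tendsto_const_nhds hlim)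
end

section
/- Let E be a real reflexive Banach space and let f : E → ℝ be a Gâteaux differentiable and totally convex function. If x₁ ∈ E and the sequence {D_f(x_n, x₁)} is bounded, then the sequence {x_n} is bounded. -/
open Filter Topology Set Bornology

/-- The (real-valued) Bregman distance `D_f(y,x) = f(y) − f(x) − ⟨∇f(x), y − x⟩` associated with
a real-valued function `f : E → ℝ` and a gradient map `f'`. -/
noncomputable def BregmanDist {E : Type*} [NormedAddCommGroup E] [NormedSpace ℝ E]
    (f : E → ℝ) (f' : E → StrongDual ℝ E) (y x : E) : ℝ :=
  f y - f x - f' x (y - x)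

/-- Let `E` be a real reflexive Banach space and `f : E → ℝ` a Gâteaux
differentiable and totally convex (convex) function.  If `x₁ ∈ E` and the sequence
`{D_f(x_n, x₁)}` is bounded, then the sequence `{x_n}` is bounded. -/
theorem stmt5 {E : Type*} [NormedAddCommGroup E] [NormedSpace ℝ E] [CompleteSpace E]
    (hrefl : Function.Surjective (NormedSpace.inclusionInDoubleDual ℝ E))
    (f : E → ℝ) (hconv : ConvexOn ℝ Set.univ f)
    (f' : E → StrongDual ℝ E)
    (hgrad : ∀ x y : E,
      Tendsto (fun t : ℝ => (f (x + t • y) - f x) / t) (𝓝[>] (0 : ℝ)) (𝓝 (f' x y)))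
    (htotconv : ∀ x : E, ∀ t : ℝ, 0 < t →
      (0 : EReal) < ⨅ (y : E) (_ : ‖y - x‖ = t), ((BregmanDist f f' y x : ℝ) : EReal))
    (x₁ : E) (x : ℕ → E)
    (hbdd : ∃ M : ℝ, ∀ n : ℕ, BregmanDist f f' (x n) x₁ ≤ M) :
    IsBounded (Set.range x) := by
  obtain ⟨M, hM⟩ := hbdd
  have hI := htotconv x₁ 1 one_pos
  obtain ⟨c, hc0, hcI⟩ := exists_between hI
  have hcT : c ≠ ⊤ := (hcI.trans_le le_top).ne
  have hcB : c ≠ ⊥ := ne_bot_of_gt hc0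
  lift c to ℝ using ⟨hcT, hcB⟩ with c
  have hc : (0 : ℝ) < c := by exact_mod_cast hc0
  -- key lower bound on the unit sphere around x₁
  have hkey : ∀ y : E, ‖y - x₁‖ = 1 → c ≤ BregmanDist f f' y x₁ := by
    intro y hy
    have : (c : EReal) ≤ ((BregmanDist f f' y x₁ : ℝ) : EReal) :=
      le_of_lt (hcI.trans_le (iInf₂_le y hy))
    exact_mod_cast this
  set R : ℝ := max 1 (M / c) with hR
  have hbound : ∀ n : ℕ, ‖x n - x₁‖ ≤ R := by
    intro n
    by_cases ht : ‖x n - x₁‖ ≤ 1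
    · exact ht.trans (le_max_left _ _)
    · push_neg at ht
      set t : ℝ := ‖x n - x₁‖ with htd
      have htpos : (0 : ℝ) < t := lt_trans one_pos ht
      set z : E := x₁ + t⁻¹ • (x n - x₁) with hz
      have hz1 : ‖z - x₁‖ = 1 := by
        rw [hz]
        simp only [add_sub_cancel_left, norm_smul, Real.norm_eq_abs,
          abs_of_pos (inv_pos.mpr htpos)]
        field_simp
        exact htd.symm
      have hzconv : z = (1 - t⁻¹) • x₁ + t⁻¹ • x n := by
        rw [hz, smul_sub]; module
      have hfz : f z ≤ (1 - t⁻¹) * f x₁ + t⁻¹ * f (x n) := by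
        rw [hzconv]
        exact hconv.2 (Set.mem_univ x₁) (Set.mem_univ (x n))
          (by nlinarith [inv_le_one_of_one_le₀ ht.le] : (0:ℝ) ≤ 1 - t⁻¹) (le_of_lt (inv_pos.mpr htpos))
          (by ring)
      have hlin : f' x₁ (z - x₁) = t⁻¹ * f' x₁ (x n - x₁) := by
        rw [hz, add_sub_cancel_left, map_smul]; rfl
      have hD : BregmanDist f f' z x₁ ≤ t⁻¹ * BregmanDist f f' (x n) x₁ := by
        unfold BregmanDist
        rw [hlin]
        nlinarith [hfz]
      have h1 : c ≤ t⁻¹ * BregmanDist f f' (x n) x₁ := (hkey z hz1).trans hD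
      have h2 : t⁻¹ * BregmanDist f f' (x n) x₁ ≤ t⁻¹ * M :=
        mul_le_mul_of_nonneg_left (hM n) (le_of_lt (inv_pos.mpr htpos))
      have h3 : c ≤ t⁻¹ * M := h1.trans h2
      have h4 : t * c ≤ M := by
        rw [mul_comm]
        calc c * t ≤ (t⁻¹ * M) * t := mul_le_mul_of_nonneg_right h3 htpos.le
        _ = M := by field_simp
      have : t ≤ M / c := (le_div_iff₀ hc).mpr h4
      exact this.trans (le_max_right _ _)
  have hsub : Set.range x ⊆ Metric.closedBall x₁ R := by
    rintro _ ⟨n, rfl⟩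
    rw [Metric.mem_closedBall, dist_eq_norm]
    exact hbound n
  exact (Metric.isBounded_closedBall).subset hsub
end

section
/- Let E be a real reflexive Banach space and let f : E → ℝ be a Legendre function such that ∇f* is bounded on bounded subsets of int dom f*. If x₁ ∈ E and the sequence {D_f(x₁, x_n)} is bounded, then the sequence {x_n} is bounded. -/
set_option maxHeartbeats 1000000


open Filter Topology Set Bornology

section Aux

variable {E : Type*} [NormedAddCommGroup E] [NormedSpace ℝ E]

/-- The subgradient inequality for a convex Gâteaux differentiable function. -/
lemma aux_subgrad {f : E → ℝ} (hconv : ConvexOn ℝ Set.univ f)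
    {f' : E → StrongDual ℝ E}
    (hgrad : ∀ x y : E,
      Tendsto (fun t : ℝ => (f (x + t • y) - f x) / t) (𝓝[>] (0 : ℝ)) (𝓝 (f' x y)))
    (x y : E) : f x + f' x (y - x) ≤ f y := by
  have key : f' x (y - x) ≤ f y - f x := by
    refine le_of_tendsto (hgrad x (y - x)) ?_
    filter_upwards [Ioo_mem_nhdsGT_of_mem (Set.left_mem_Ico.mpr one_pos)] with t ht
    obtain ⟨ht0, ht1⟩ := ht
    have hxe : x + t • (y - x) = (1 - t) • x + t • y := by
      rw [smul_sub, sub_smul, one_smul]; abel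
    have hc := hconv.2 (Set.mem_univ x) (Set.mem_univ y)
      (by linarith : (0:ℝ) ≤ 1 - t) ht0.le (by ring)
    rw [hxe, div_le_iff₀ ht0]
    have : f ((1 - t) • x + t • y) ≤ (1 - t) * f x + t * f y := by
      simpa [smul_eq_mul] using hc
    nlinarith
  linarith

end Aux

/-- Let `E` be a real reflexive Banach space and `f : E → ℝ` a (convex,
Gâteaux differentiable) Legendre function such that `∇f*` is bounded on bounded subsets of
`int dom f*`.  If `x₁ ∈ E` and the sequence `{D_f(x₁, x_n)}` is bounded, then the sequence
`{x_n}` is bounded. -/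
theorem stmt6 {E : Type*} [NormedAddCommGroup E] [NormedSpace ℝ E] [CompleteSpace E]
    (hrefl : Function.Surjective (NormedSpace.inclusionInDoubleDual ℝ E))
    (f : E → ℝ) (hconv : ConvexOn ℝ Set.univ f)
    (f' : E → StrongDual ℝ E)
    (hgrad : ∀ x y : E,
      Tendsto (fun t : ℝ => (f (x + t • y) - f x) / t) (𝓝[>] (0 : ℝ)) (𝓝 (f' x y)))
    -- the Fenchel conjugate of `f`
    (fstar : StrongDual ℝ E → EReal)
    (hfstar : ∀ ξ : StrongDual ℝ E, fstar ξ = ⨆ x : E, ((ξ x - f x : ℝ) : EReal))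
    -- (L1): `int dom f ≠ ∅` and `∂f` is single-valued on its domain
    (hL1 : (interior (Set.univ : Set E)).Nonempty ∧
      ∀ x : E, Set.Subsingleton
        {ξ : StrongDual ℝ E | ∀ y : E, f x + ξ (y - x) ≤ f y})
    -- (L2): `int dom f* ≠ ∅` and `∂f*` is single-valued on its domain
    (hL2 : (interior {ξ : StrongDual ℝ E | fstar ξ ≠ ⊤}).Nonempty ∧
      ∀ ξ : StrongDual ℝ E, Set.Subsingleton
        {Λ : StrongDual ℝ (StrongDual ℝ E) |
          ∀ η : StrongDual ℝ E, fstar ξ + ((Λ (η - ξ) : ℝ) : EReal) ≤ fstar η})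
    -- `∇f*` (under the reflexive identification `E** = E`) …
    (g : StrongDual ℝ E → E)
    (hg : ∀ ξ ∈ interior {ξ : StrongDual ℝ E | fstar ξ ≠ ⊤},
      ∀ η : StrongDual ℝ E,
        Tendsto (fun t : ℝ => ((fstar (ξ + t • η)).toReal - (fstar ξ).toReal) / t)
          (𝓝[>] (0 : ℝ)) (𝓝 (η (g ξ))))
    -- … is bounded on bounded subsets of `int dom f*`
    (hgbdd : ∀ B : Set (StrongDual ℝ E), IsBounded B →
      B ⊆ interior {ξ : StrongDual ℝ E | fstar ξ ≠ ⊤} → IsBounded (g '' B))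
    (x₁ : E) (x : ℕ → E)
    (hbdd : ∃ M : ℝ, ∀ n : ℕ, BregmanDist f f' x₁ (x n) ≤ M) :
    IsBounded (Set.range x) := by
  classical
  obtain ⟨M, hM⟩ := hbdd
  have hsub : ∀ a y : E, f a + f' a (y - a) ≤ f y := aux_subgrad hconv hgrad
  -- sublevel sets of f are closed
  have hclosed : ∀ k : ℕ, IsClosed {y : E | f y ≤ (k : ℝ)} := by
    intro k
    refine isClosed_of_closure_subset ?_
    intro y hy
    by_contra hlt
    simp only [Set.mem_setOf_eq, not_le] at hlt
    set ε := (f y - k) / (‖f' y‖ + 1) with hε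
    have hεpos : 0 < ε := div_pos (by linarith) (by positivity)
    obtain ⟨z, hz, hdz⟩ := Metric.mem_closure_iff.mp hy ε hεpos
    simp only [Set.mem_setOf_eq] at hz
    have h1 : f y + f' y (z - y) ≤ f z := hsub y z
    have h2 : |f' y (z - y)| ≤ ‖f' y‖ * ‖z - y‖ := by
      have := (f' y).le_opNorm (z - y)
      simpa [Real.norm_eq_abs] using this
    have h3 : ‖z - y‖ < ε := by rw [← dist_eq_norm, dist_comm]; exact hdz
    have h4 : ‖f' y‖ * ‖z - y‖ ≤ ‖f' y‖ * ε :=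
      mul_le_mul_of_nonneg_left h3.le (norm_nonneg _)
    have h5 : (‖f' y‖ + 1) * ε = f y - k := by
      rw [hε]; field_simp
    have h6 : ‖f' y‖ * ε < (‖f' y‖ + 1) * ε := by nlinarith
    have h7 : -(‖f' y‖ * ‖z - y‖) ≤ f' y (z - y) := by
      have := abs_le.mp h2
      linarith [this.1]
    linarith
  -- Baire category: some sublevel set has nonempty interior
  have hcover : ⋃ k : ℕ, {y : E | f y ≤ (k : ℝ)} = Set.univ := by
    ext y
    simp only [Set.mem_iUnion, Set.mem_setOf_eq, Set.mem_univ, iff_true]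
    exact exists_nat_ge (f y)
  obtain ⟨k, z₀, hz₀⟩ := nonempty_interior_of_iUnion_of_closed hclosed hcover
  obtain ⟨r, hr, hball⟩ := Metric.mem_nhds_iff.mp (mem_interior_iff_mem_nhds.mp hz₀)
  -- f is bounded above near x₁
  set C : ℝ := ((k : ℝ) + f ((2 : ℝ) • x₁ - z₀)) / 2 with hCdef
  have hC : ∀ v : E, ‖v‖ ≤ r / 4 → f (x₁ + v) ≤ C := by
    intro v hv
    have hmem : z₀ + (2 : ℝ) • v ∈ Metric.ball z₀ r := by
      rw [Metric.mem_ball, dist_eq_norm]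
      have : z₀ + (2 : ℝ) • v - z₀ = (2 : ℝ) • v := by abel
      rw [this, norm_smul, Real.norm_eq_abs]
      rw [abs_of_pos (by norm_num : (0:ℝ) < 2)]
      linarith
    have h1 : f (z₀ + (2 : ℝ) • v) ≤ (k : ℝ) := hball hmem
    have hcomb : x₁ + v =
        (1 / 2 : ℝ) • (z₀ + (2 : ℝ) • v) + (1 / 2 : ℝ) • ((2 : ℝ) • x₁ - z₀) := by
      rw [smul_add, smul_sub, smul_smul, smul_smul]
      norm_num
      abel
    have hc := hconv.2 (Set.mem_univ (z₀ + (2 : ℝ) • v)) (Set.mem_univ ((2 : ℝ) • x₁ - z₀))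
      (by norm_num : (0:ℝ) ≤ 1/2) (by norm_num : (0:ℝ) ≤ 1/2) (by norm_num)
    rw [hcomb]
    simp only [smul_eq_mul] at hc
    rw [hCdef]
    linarith
  -- the gradients ξ n := f' (x n) satisfy a uniform linear bound near 0
  set K : ℝ := C - f x₁ + M with hKdef
  have hξle : ∀ (n : ℕ) (v : E), ‖v‖ ≤ r / 4 → f' (x n) v ≤ K := by
    intro n v hv
    have h1 : f (x n) + f' (x n) ((x₁ + v) - x n) ≤ f (x₁ + v) := hsub (x n) (x₁ + v)
    have h2 : f x₁ - f (x n) - f' (x n) (x₁ - x n) ≤ M := hM n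
    have h3 : f (x₁ + v) ≤ C := hC v hv
    have e1 : f' (x n) ((x₁ + v) - x n) = f' (x n) (x₁ - x n) + f' (x n) v := by
      rw [← map_add]
      congr 1
      abel
    rw [e1] at h1
    rw [hKdef]
    linarith
  have hK0 : 0 ≤ K := by
    have := hξle 0 0 (by simp; positivity)
    simpa using this
  have hξnorm : ∀ n : ℕ, ‖f' (x n)‖ ≤ K * (4 / r) := by
    intro n
    refine ContinuousLinearMap.opNorm_le_bound _ (by positivity) ?_
    intro v
    rcases eq_or_ne v 0 with rfl | hv
    · simp
    · have hvpos : 0 < ‖v‖ := norm_pos_iff.mpr hv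
      set w := (r / (4 * ‖v‖)) • v with hw
      have hwnorm : ‖w‖ = r / 4 := by
        rw [hw, norm_smul, Real.norm_eq_abs, abs_of_pos (by positivity)]
        field_simp
      have h1 : f' (x n) w ≤ K := hξle n w (le_of_eq hwnorm)
      have h2 : f' (x n) (-w) ≤ K := hξle n (-w) (by rw [norm_neg]; exact le_of_eq hwnorm)
      rw [map_neg] at h2
      have h3 : |f' (x n) w| ≤ K := abs_le.mpr ⟨by linarith, h1⟩
      have h4 : f' (x n) w = (r / (4 * ‖v‖)) * f' (x n) v := by
        rw [hw, map_smul, smul_eq_mul]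
      have h5 : (r / (4 * ‖v‖)) * |f' (x n) v| ≤ K := by
        rw [← abs_of_pos (show (0:ℝ) < r / (4 * ‖v‖) by positivity), ← abs_mul, ← h4]
        exact h3
      have h6 : |f' (x n) v| ≤ K / (r / (4 * ‖v‖)) := by
        rw [le_div_iff₀ (by positivity)]
        calc |f' (x n) v| * (r / (4 * ‖v‖)) = (r / (4 * ‖v‖)) * |f' (x n) v| := by ring
          _ ≤ K := h5
      have h7 : K / (r / (4 * ‖v‖)) = K * (4 / r) * ‖v‖ := by
        rw [div_div_eq_mul_div]
        ring
      rw [Real.norm_eq_abs]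
      linarith
  -- basic facts about fstar
  have hfne_bot : ∀ ζ : StrongDual ℝ E, fstar ζ ≠ ⊥ := by
    intro ζ hbot
    have hle : ((ζ 0 - f 0 : ℝ) : EReal) ≤ fstar ζ := by
      rw [hfstar]
      exact le_iSup (fun y : E => ((ζ y - f y : ℝ) : EReal)) 0
    rw [hbot, le_bot_iff] at hle
    exact EReal.coe_ne_bot _ hle
  have hle_toReal : ∀ ζ : StrongDual ℝ E, fstar ζ ≠ ⊤ →
      ∀ y : E, ζ y - f y ≤ (fstar ζ).toReal := by
    intro ζ hζ y
    have h1 : ((ζ y - f y : ℝ) : EReal) ≤ fstar ζ := by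
      rw [hfstar]
      exact le_iSup (fun y : E => ((ζ y - f y : ℝ) : EReal)) y
    rw [← EReal.coe_toReal hζ (hfne_bot ζ)] at h1
    exact EReal.coe_le_coe_iff.mp h1
  -- value of fstar at the gradient
  have hsn : ∀ (n : ℕ) (y : E), f' (x n) y - f y ≤ f' (x n) (x n) - f (x n) := by
    intro n y
    have h := hsub (x n) y
    rw [map_sub] at h
    linarith
  have hfval : ∀ n : ℕ, fstar (f' (x n)) = ((f' (x n) (x n) - f (x n) : ℝ) : EReal) := by
    intro n
    rw [hfstar]
    apply le_antisymm
    · exact iSup_le fun y => EReal.coe_le_coe_iff.mpr (hsn n y)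
    · exact le_iSup (fun y : E => ((f' (x n) y - f y : ℝ) : EReal)) (x n)
  set J := NormedSpace.inclusionInDoubleDual ℝ E with hJdef
  -- J (x n) is a subgradient of fstar at f' (x n)
  have hJmem : ∀ n : ℕ, ∀ η : StrongDual ℝ E,
      fstar (f' (x n)) + (((J (x n)) (η - f' (x n)) : ℝ) : EReal) ≤ fstar η := by
    intro n η
    have hd : (J (x n)) (η - f' (x n)) = η (x n) - f' (x n) (x n) := by
      rw [hJdef, NormedSpace.dual_def]
      simp [ContinuousLinearMap.sub_apply]
    rw [hfval n, hd, ← EReal.coe_add]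
    have heq : (f' (x n) (x n) - f (x n)) + (η (x n) - f' (x n) (x n)) = η (x n) - f (x n) := by
      ring
    rw [heq, hfstar η]
    exact le_iSup (fun y : E => ((η y - f y : ℝ) : EReal)) (x n)
  -- the domain of fstar is convex
  have hdomconv : Convex ℝ {ζ : StrongDual ℝ E | fstar ζ ≠ ⊤} := by
    intro ζ₁ h1 ζ₂ h2 a b ha hb hab
    simp only [Set.mem_setOf_eq] at h1 h2 ⊢
    intro htop
    have hbound : fstar (a • ζ₁ + b • ζ₂) ≤
        ((a * (fstar ζ₁).toReal + b * (fstar ζ₂).toReal : ℝ) : EReal) := by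
      rw [hfstar]
      refine iSup_le fun y => EReal.coe_le_coe_iff.mpr ?_
      have e1 : (a • ζ₁ + b • ζ₂) y = a * ζ₁ y + b * ζ₂ y := by
        simp [ContinuousLinearMap.add_apply, ContinuousLinearMap.smul_apply, smul_eq_mul]
      have b1 : ζ₁ y - f y ≤ (fstar ζ₁).toReal := hle_toReal ζ₁ h1 y
      have b2 : ζ₂ y - f y ≤ (fstar ζ₂).toReal := hle_toReal ζ₂ h2 y
      have e2 : a * f y + b * f y = f y := by rw [← add_mul, hab, one_mul]
      rw [e1]
      nlinarith [mul_le_mul_of_nonneg_left b1 ha, mul_le_mul_of_nonneg_left b2 hb]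
    rw [htop] at hbound
    exact (EReal.coe_ne_top _) (top_le_iff.mp hbound)
  obtain ⟨ζ₀, hζ₀⟩ := hL2.1
  -- every gradient f' (x n) lies in the interior of the domain of fstar
  have hinU : ∀ n : ℕ, f' (x n) ∈ interior {ξ : StrongDual ℝ E | fstar ξ ≠ ⊤} := by
    intro n
    by_contra hnot
    obtain ⟨ν, hν⟩ := geometric_hahn_banach_open_point
      (hdomconv.interior) isOpen_interior hnot
    have hνdom : ∀ η : StrongDual ℝ E, fstar η ≠ ⊤ → ν η ≤ ν (f' (x n)) := by
      intro η hη
      have hseg : ∀ t : ℝ, t ∈ Set.Ioo (0:ℝ) 1 →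
          ν ((1 - t) • η + t • ζ₀) < ν (f' (x n)) := by
        intro t ht
        exact hν _ (hdomconv.combo_self_interior_mem_interior hη hζ₀
          (by linarith [ht.2]) ht.1 (by ring))
      have hcont : Continuous fun t : ℝ => ν ((1 - t) • η + t • ζ₀) := by
        refine ν.continuous.comp (Continuous.add ?_ ?_)
        · exact (continuous_const.sub continuous_id).smul continuous_const
        · exact continuous_id.smul continuous_const
      have htend : Tendsto (fun t : ℝ => ν ((1 - t) • η + t • ζ₀)) (𝓝[>] (0:ℝ))
          (𝓝 (ν η)) := by
        have h0 : ν ((1 - (0:ℝ)) • η + (0:ℝ) • ζ₀) = ν η := by norm_num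
        have := (hcont.tendsto 0).mono_left (nhdsWithin_le_nhds (s := Set.Ioi (0:ℝ)))
        rwa [h0] at this
      refine le_of_tendsto htend ?_
      filter_upwards [Ioo_mem_nhdsGT_of_mem (Set.left_mem_Ico.mpr one_pos)] with t ht
      exact (hseg t ht).le
    -- J (x n) + ν is also a subgradient of fstar at f' (x n)
    have hΛ' : ∀ η : StrongDual ℝ E,
        fstar (f' (x n)) + ((((J (x n) + ν)) (η - f' (x n)) : ℝ) : EReal) ≤ fstar η := by
      intro η
      by_cases hη : fstar η = ⊤
      · rw [hη]; exact le_top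
      · have h1 := hJmem n η
        have h2 : ν (η - f' (x n)) ≤ 0 := by
          have := hνdom η hη
          rw [map_sub]
          linarith
        rw [hfval n, ContinuousLinearMap.add_apply, ← EReal.coe_add]
        rw [hfval n, ← EReal.coe_add] at h1
        calc (((f' (x n) (x n) - f (x n)) + (J (x n) (η - f' (x n)) + ν (η - f' (x n))) : ℝ) :
              EReal)
            ≤ (((f' (x n) (x n) - f (x n)) + J (x n) (η - f' (x n)) : ℝ) : EReal) := by
              exact EReal.coe_le_coe_iff.mpr (by linarith)
          _ ≤ fstar η := h1
    have heq : J (x n) + ν = J (x n) :=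
      hL2.2 (f' (x n)) hΛ' (hJmem n)
    have hν0 : ν = 0 := by
      have := add_eq_left.mp heq
      exact this
    have := hν ζ₀ hζ₀
    rw [hν0] at this
    simp at this
  -- x n = g (f' (x n))
  have hgx : ∀ n : ℕ, g (f' (x n)) = x n := by
    intro n
    have hmemU := hinU n
    have hξnT : fstar (f' (x n)) ≠ ⊤ := interior_subset hmemU
    -- J (g (f' (x n))) is a subgradient of fstar at f' (x n)
    have hJg : ∀ η : StrongDual ℝ E,
        fstar (f' (x n)) + (((J (g (f' (x n)))) (η - f' (x n)) : ℝ) : EReal) ≤ fstar η := by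
      intro η
      by_cases hη : fstar η = ⊤
      · rw [hη]; exact le_top
      have hkey : ∀ t : ℝ, t ∈ Set.Ioo (0:ℝ) 1 →
          ((fstar (f' (x n) + t • (η - f' (x n)))).toReal - (fstar (f' (x n))).toReal) / t ≤
            (fstar η).toReal - (fstar (f' (x n))).toReal := by
        intro t ht
        have hc : fstar (f' (x n) + t • (η - f' (x n))) ≤
            (((1 - t) * (fstar (f' (x n))).toReal + t * (fstar η).toReal : ℝ) : EReal) := by
          rw [hfstar]
          refine iSup_le fun y => EReal.coe_le_coe_iff.mpr ?_
          have e1 : (f' (x n) + t • (η - f' (x n))) y = (1 - t) * f' (x n) y + t * η y := by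
            simp [ContinuousLinearMap.add_apply, ContinuousLinearMap.smul_apply,
              ContinuousLinearMap.sub_apply, smul_eq_mul]
            ring
          have b1 : f' (x n) y - f y ≤ (fstar (f' (x n))).toReal := hle_toReal _ hξnT y
          have b2 : η y - f y ≤ (fstar η).toReal := hle_toReal η hη y
          rw [e1]
          nlinarith [ht.1.le, ht.2.le]
        have h2 : (fstar (f' (x n) + t • (η - f' (x n)))).toReal ≤
            (1 - t) * (fstar (f' (x n))).toReal + t * (fstar η).toReal := by
          have := EReal.toReal_le_toReal hc (hfne_bot _) (EReal.coe_ne_top _)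
          rwa [EReal.toReal_coe] at this
        rw [div_le_iff₀ ht.1]
        nlinarith
      have hlim := hg (f' (x n)) hmemU (η - f' (x n))
      have hDle : (η - f' (x n)) (g (f' (x n))) ≤
          (fstar η).toReal - (fstar (f' (x n))).toReal := by
        refine le_of_tendsto hlim ?_
        filter_upwards [Ioo_mem_nhdsGT_of_mem (Set.left_mem_Ico.mpr one_pos)] with t ht
        exact hkey t ht
      have hJgval : (J (g (f' (x n)))) (η - f' (x n)) = (η - f' (x n)) (g (f' (x n))) := by
        rw [hJdef, NormedSpace.dual_def]
      have hsnR : (fstar (f' (x n))).toReal = f' (x n) (x n) - f (x n) := by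
        rw [hfval n, EReal.toReal_coe]
      rw [hJgval, hfval n, ← EReal.coe_add]
      rw [← EReal.coe_toReal hη (hfne_bot η)]
      refine EReal.coe_le_coe_iff.mpr ?_
      rw [hsnR] at hDle
      linarith
    have heq : J (g (f' (x n))) = J (x n) :=
      hL2.2 (f' (x n)) hJg (hJmem n)
    have : ∀ φ : StrongDual ℝ E, φ (g (f' (x n))) = φ (x n) := by
      intro φ
      have h1 : J (g (f' (x n))) φ = J (x n) φ := by rw [heq]
      rwa [hJdef, NormedSpace.dual_def, NormedSpace.dual_def] at h1
    exact (NormedSpace.eq_iff_forall_dual_eq ℝ).mpr this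
  -- conclude
  have hB : IsBounded (Set.range fun n : ℕ => f' (x n)) := by
    rw [isBounded_iff_forall_norm_le]
    exact ⟨K * (4 / r), by rintro _ ⟨n, rfl⟩; exact hξnorm n⟩
  have hsubU : Set.range (fun n : ℕ => f' (x n)) ⊆
      interior {ξ : StrongDual ℝ E | fstar ξ ≠ ⊤} := by
    rintro _ ⟨n, rfl⟩
    exact hinU n
  have hbig := hgbdd _ hB hsubU
  refine hbig.subset ?_
  rintro _ ⟨n, rfl⟩
  exact ⟨f' (x n), ⟨n, rfl⟩, hgx n⟩
end

section
/- Let E be a real reflexive Banach space, let f : E → (−∞,+∞] be Gâteaux differentiable and totally convex on int dom f, let x ∈ int dom f, and let C ⊆ int dom f be a nonempty, closed and convex set. Then for z₀ ∈ C the following are equivalent: (i) z₀ = proj_C^f(x), the Bregman projection of x onto C; (ii) z₀ is the unique solution z ∈ C of the variational inequality ⟨∇f(x) − ∇f(z), z − y⟩ ≥ 0 for all y ∈ C; (iii) z₀ is the unique solution z ∈ C of the inequality D_f(y,z) + D_f(z,x) ≤ D_f(y,x) for all y ∈ C. -/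
open Filter Topology Set Bornology

/-- The Bregman distance `D_f(y,x) = f(y) − f(x) − ⟨∇f(x), y − x⟩` of an extended-real-valued
function `f`, real-valued (via `EReal.toReal`; it is used only at points where `f` is finite). -/
noncomputable def BregmanDistR {E : Type*} [NormedAddCommGroup E] [NormedSpace ℝ E]
    (f : E → EReal) (f' : E → StrongDual ℝ E) (y x : E) : ℝ :=
  (f y).toReal - (f x).toReal - f' x (y - x)

set_option maxHeartbeats 1600000 in
/-- Let `E` be a real reflexive Banach space, `f : E → (−∞,+∞]` (proper,
convex, lower semicontinuous) Gâteaux differentiable and totally convex on `int dom f`,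
`x ∈ int dom f` and `C ⊆ int dom f` nonempty closed convex.  Then for `z₀ ∈ C` TFAE:
(i) `z₀` is the Bregman projection of `x` onto `C` (the unique minimizer of `D_f(·,x)` on `C`);
(ii) `z₀` is the unique solution `z ∈ C` of `⟨∇f(x) − ∇f(z), z − y⟩ ≥ 0` for all `y ∈ C`;
(iii) `z₀` is the unique solution `z ∈ C` of `D_f(y,z) + D_f(z,x) ≤ D_f(y,x)` for all `y ∈ C`. -/
theorem stmt7 {E : Type*} [NormedAddCommGroup E] [NormedSpace ℝ E] [CompleteSpace E]
    (hrefl : Function.Surjective (NormedSpace.inclusionInDoubleDual ℝ E))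
    (f : E → EReal)
    (hnebot : ∀ x : E, f x ≠ ⊥)
    (hproper : ∃ x : E, f x ≠ ⊤)
    (hlsc : LowerSemicontinuous f)
    (hconv : ∀ x y : E, ∀ a b : ℝ, 0 ≤ a → 0 ≤ b → a + b = 1 →
      f (a • x + b • y) ≤ (a : EReal) * f x + (b : EReal) * f y)
    (f' : E → StrongDual ℝ E)
    (hgrad : ∀ z ∈ interior {w : E | f w ≠ ⊤}, ∀ y : E,
      Tendsto (fun t : ℝ => ((f (z + t • y)).toReal - (f z).toReal) / t)
        (𝓝[>] (0 : ℝ)) (𝓝 (f' z y)))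
    -- total convexity of `f` on `int dom f`
    (htotconv : ∀ z ∈ interior {w : E | f w ≠ ⊤}, ∀ t : ℝ, 0 < t →
      (0 : EReal) < ⨅ (y : E) (_ : f y ≠ ⊤ ∧ ‖y - z‖ = t),
        ((BregmanDistR f f' y z : ℝ) : EReal))
    (x : E) (hx : x ∈ interior {w : E | f w ≠ ⊤})
    (C : Set E) (hCne : C.Nonempty) (hCcl : IsClosed C) (hCconv : Convex ℝ C)
    (hCsub : C ⊆ interior {w : E | f w ≠ ⊤})
    (z₀ : E) (hz₀ : z₀ ∈ C) :
    -- (i) ↔ (ii)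
    (((∀ y ∈ C, BregmanDistR f f' z₀ x ≤ BregmanDistR f f' y x) ∧
      (∀ z ∈ C, (∀ y ∈ C, BregmanDistR f f' z x ≤ BregmanDistR f f' y x) → z = z₀))
     ↔
     ((∀ y ∈ C, 0 ≤ (f' x - f' z₀) (z₀ - y)) ∧
      (∀ z ∈ C, (∀ y ∈ C, 0 ≤ (f' x - f' z) (z - y)) → z = z₀)))
    ∧
    -- (ii) ↔ (iii)
    (((∀ y ∈ C, 0 ≤ (f' x - f' z₀) (z₀ - y)) ∧
      (∀ z ∈ C, (∀ y ∈ C, 0 ≤ (f' x - f' z) (z - y)) → z = z₀))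
     ↔
     ((∀ y ∈ C,
        BregmanDistR f f' y z₀ + BregmanDistR f f' z₀ x ≤ BregmanDistR f f' y x) ∧
      (∀ z ∈ C, (∀ y ∈ C,
        BregmanDistR f f' y z + BregmanDistR f f' z x ≤ BregmanDistR f f' y x) → z = z₀))) := by
  classical
  set S := interior {w : E | f w ≠ ⊤} with hS
  have hSopen : IsOpen S := isOpen_interior
  have hmem : ∀ w ∈ S, f w ≠ ⊤ := fun w hw => interior_subset hw
  -- real-valued convexity inequality
  have hconvR : ∀ y z : E, f y ≠ ⊤ → f z ≠ ⊤ → ∀ t : ℝ, 0 ≤ t → t ≤ 1 →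
      (f (z + t • (y - z))).toReal ≤ (1 - t) * (f z).toReal + t * (f y).toReal := by
    intro y z hy hz t ht0 ht1
    have h := hconv z y (1 - t) t (by linarith) ht0 (by ring)
    have heq : (1 - t) • z + t • y = z + t • (y - z) := by
      rw [smul_sub, sub_smul, one_smul]; abel
    rw [heq] at h
    have hz' : f z = ((f z).toReal : EReal) := (EReal.coe_toReal hz (hnebot z)).symm
    have hy' : f y = ((f y).toReal : EReal) := (EReal.coe_toReal hy (hnebot y)).symm
    rw [hz', hy'] at h
    have hcast : ((1 - t : ℝ) : EReal) * (((f z).toReal : ℝ) : EReal)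
        + ((t : ℝ) : EReal) * (((f y).toReal : ℝ) : EReal)
        = (((1 - t) * (f z).toReal + t * (f y).toReal : ℝ) : EReal) := by
      norm_cast
    rw [hcast] at h
    have := EReal.toReal_le_toReal h (hnebot _) (EReal.coe_ne_top _)
    rwa [EReal.toReal_coe] at this
  -- subgradient inequality
  have hsub : ∀ z ∈ S, ∀ y : E, f y ≠ ⊤ →
      f' z (y - z) ≤ (f y).toReal - (f z).toReal := by
    intro z hzS y hy
    have htend := hgrad z hzS (y - z)
    refine le_of_tendsto htend ?_
    have hcont : Tendsto (fun t : ℝ => z + t • (y - z)) (𝓝 0) (𝓝 z) := by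
      have hc : Continuous fun t : ℝ => z + t • (y - z) := by continuity
      have h0 : z + (0 : ℝ) • (y - z) = z := by simp
      simpa [h0] using hc.tendsto 0
    have hev : ∀ᶠ t : ℝ in 𝓝[>] 0, z + t • (y - z) ∈ S :=
      (hcont.eventually (hSopen.mem_nhds hzS)).filter_mono nhdsWithin_le_nhds
    have hlt1 : ∀ᶠ t : ℝ in 𝓝[>] (0 : ℝ), t < 1 := by
      have : ∀ᶠ t : ℝ in 𝓝 (0 : ℝ), t < 1 := by
        filter_upwards [Iio_mem_nhds (zero_lt_one)] with t ht using ht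
      exact this.filter_mono nhdsWithin_le_nhds
    filter_upwards [hev, hlt1, self_mem_nhdsWithin] with t htS ht1 ht0
    have hc := hconvR y z hy (hmem z hzS) t (le_of_lt ht0) (le_of_lt ht1)
    rw [div_le_iff₀ ht0]
    nlinarith [hc]
  -- minimality implies variational inequality
  have hminVI : ∀ z ∈ C, (∀ y ∈ C, BregmanDistR f f' z x ≤ BregmanDistR f f' y x) →
      ∀ y ∈ C, 0 ≤ (f' x - f' z) (z - y) := by
    intro z hzC hmin y hyC
    have hzS := hCsub hzC
    have htend := hgrad z hzS (y - z)
    have key : f' x (y - z) ≤ f' z (y - z) := by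
      refine ge_of_tendsto htend ?_
      have hlt1 : ∀ᶠ t : ℝ in 𝓝[>] (0 : ℝ), t < 1 := by
        have : ∀ᶠ t : ℝ in 𝓝 (0 : ℝ), t < 1 := by
          filter_upwards [Iio_mem_nhds (zero_lt_one)] with t ht using ht
        exact this.filter_mono nhdsWithin_le_nhds
      filter_upwards [hlt1, self_mem_nhdsWithin] with t ht1 ht0
      have hmemC : z + t • (y - z) ∈ C := by
        have h := hCconv hzC hyC (a := 1 - t) (b := t) (by linarith) (le_of_lt ht0) (by ring)
        have heq : (1 - t) • z + t • y = z + t • (y - z) := by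
          rw [smul_sub, sub_smul, one_smul]; abel
        rwa [heq] at h
      have hm := hmin _ hmemC
      unfold BregmanDistR at hm
      have e1 : f' x ((z + t • (y - z)) - x) = t * f' x (y - z) + f' x (z - x) := by
        have : (z + t • (y - z)) - x = t • (y - z) + (z - x) := by abel
        rw [this, map_add, map_smul]; rfl
      rw [e1] at hm
      rw [le_div_iff₀ ht0]
      linarith
    have e2 : (f' x - f' z) (z - y) = -(f' x (y - z)) + f' z (y - z) := by
      rw [ContinuousLinearMap.sub_apply, show (z : E) - y = -(y - z) by abel,
        map_neg, map_neg]
      ring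
    linarith [key, e2.ge, e2.le]
  -- variational inequality implies minimality
  have hVImin : ∀ z ∈ C, (∀ y ∈ C, 0 ≤ (f' x - f' z) (z - y)) →
      ∀ y ∈ C, BregmanDistR f f' z x ≤ BregmanDistR f f' y x := by
    intro z hzC hvi y hyC
    have h1 := hsub z (hCsub hzC) y (hmem y (hCsub hyC))
    have h2 := hvi y hyC
    have e2 : (f' x - f' z) (z - y) = -(f' x (y - z)) + f' z (y - z) := by
      rw [ContinuousLinearMap.sub_apply, show (z : E) - y = -(y - z) by abel,
        map_neg, map_neg]
      ring
    rw [e2] at h2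
    unfold BregmanDistR
    have e3 : f' x (y - x) = f' x (y - z) + f' x (z - x) := by
      rw [← map_add]; congr 1; abel
    rw [e3]
    linarith
  -- pointwise identity for (ii) ↔ (iii)
  have hiden : ∀ z y : E,
      (BregmanDistR f f' y z + BregmanDistR f f' z x ≤ BregmanDistR f f' y x)
      ↔ 0 ≤ (f' x - f' z) (z - y) := by
    intro z y
    unfold BregmanDistR
    have e2 : (f' x - f' z) (z - y) = -(f' x (y - z)) + f' z (y - z) := by
      rw [ContinuousLinearMap.sub_apply, show (z : E) - y = -(y - z) by abel,
        map_neg, map_neg]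
      ring
    have e3 : f' x (y - x) = f' x (y - z) + f' x (z - x) := by
      rw [← map_add]; congr 1; abel
    rw [e2, e3]
    constructor <;> intro h <;> linarith
  refine ⟨⟨?_, ?_⟩, ?_⟩
  · rintro ⟨hm, hu⟩
    exact ⟨hminVI z₀ hz₀ hm, fun z hz hviz => hu z hz (hVImin z hz hviz)⟩
  · rintro ⟨hv, hu⟩
    exact ⟨hVImin z₀ hz₀ hv, fun z hz hmz => hu z hz (hminVI z hz hmz)⟩
  constructor
  · rintro ⟨hv, hu⟩
    exact ⟨fun y hy => (hiden z₀ y).mpr (hv y hy),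
      fun z hz h3 => hu z hz (fun y hy => (hiden z y).mp (h3 y hy))⟩
  · rintro ⟨h3, hu⟩
    exact ⟨fun y hy => (hiden z₀ y).mp (h3 y hy),
      fun z hz hv => hu z hz (fun y hy => (hiden z y).mpr (hv y hy))⟩
end

section
/- Let E be a real reflexive Banach space and let f, g : E → (−∞,+∞] be two proper convex functions such that there exists a point x₀ ∈ dom f ∩ dom g at which f is continuous. Then ∂(f+g)(x) = ∂f(x) + ∂g(x) for every x ∈ E. -/
open Filter Topology Set Bornology Pointwise

/-- Real-valued convexity transfer for an `EReal`-valued convex function. -/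
lemma stmt9_real_convex {E : Type*} [AddCommGroup E] [Module ℝ E] (φ : E → EReal)
    (hbot : ∀ z, φ z ≠ ⊥)
    (hconv : ∀ x y : E, ∀ a b : ℝ, 0 ≤ a → 0 ≤ b → a + b = 1 →
      φ (a • x + b • y) ≤ (a : EReal) * φ x + (b : EReal) * φ y)
    {y₁ y₂ : E} (h₁ : φ y₁ ≠ ⊤) (h₂ : φ y₂ ≠ ⊤) {l m : ℝ}
    (hl : 0 ≤ l) (hm : 0 ≤ m) (hlm : l + m = 1) :
    φ (l • y₁ + m • y₂) ≠ ⊤ ∧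
      (φ (l • y₁ + m • y₂)).toReal ≤ l * (φ y₁).toReal + m * (φ y₂).toReal := by
  have key := hconv y₁ y₂ l m hl hm hlm
  rw [← EReal.coe_toReal h₁ (hbot y₁), ← EReal.coe_toReal h₂ (hbot y₂),
    ← EReal.coe_mul, ← EReal.coe_mul, ← EReal.coe_add] at key
  refine ⟨(lt_of_le_of_lt key (EReal.coe_lt_top _)).ne, ?_⟩
  have := EReal.toReal_le_toReal key (hbot _) (EReal.coe_ne_top _)
  rwa [EReal.toReal_coe] at this

set_option maxHeartbeats 1000000

/-- Let `E` be a real reflexive Banach space and `f, g : E → (−∞,+∞]` two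
proper convex functions such that there is a point `x₀ ∈ dom f ∩ dom g` at which `f` is
continuous.  Then `∂(f+g)(x) = ∂f(x) + ∂g(x)` for every `x ∈ E` (Minkowski sum). -/
theorem stmt9 {E : Type*} [NormedAddCommGroup E] [NormedSpace ℝ E] [CompleteSpace E]
    (hrefl : Function.Surjective (NormedSpace.inclusionInDoubleDual ℝ E))
    (f g : E → EReal)
    (hfnebot : ∀ x : E, f x ≠ ⊥) (hgnebot : ∀ x : E, g x ≠ ⊥)
    (hfproper : ∃ x : E, f x ≠ ⊤) (hgproper : ∃ x : E, g x ≠ ⊤)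
    (hfconv : ∀ x y : E, ∀ a b : ℝ, 0 ≤ a → 0 ≤ b → a + b = 1 →
      f (a • x + b • y) ≤ (a : EReal) * f x + (b : EReal) * f y)
    (hgconv : ∀ x y : E, ∀ a b : ℝ, 0 ≤ a → 0 ≤ b → a + b = 1 →
      g (a • x + b • y) ≤ (a : EReal) * g x + (b : EReal) * g y)
    (x₀ : E) (hx₀f : f x₀ ≠ ⊤) (hx₀g : g x₀ ≠ ⊤)
    (hfcont : ContinuousAt f x₀) :
    ∀ x : E,
      {ξ : StrongDual ℝ E | ∀ y : E,
          (f x + g x) + ((ξ (y - x) : ℝ) : EReal) ≤ f y + g y} =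
      {ξ : StrongDual ℝ E | ∀ y : E, f x + ((ξ (y - x) : ℝ) : EReal) ≤ f y} +
      {ξ : StrongDual ℝ E | ∀ y : E, g x + ((ξ (y - x) : ℝ) : EReal) ≤ g y} := by
  intro x
  ext ξ
  simp only [Set.mem_add, Set.mem_setOf_eq]
  constructor
  · -- hard direction
    intro H
    -- Step 1: `f x` and `g x` are finite.
    have hfgx : f x + g x ≠ ⊤ := by
      intro htop
      have h1 := H x₀
      rw [htop, EReal.top_add_coe, top_le_iff] at h1
      exact (EReal.add_lt_top hx₀f hx₀g).ne h1
    have hfx : f x ≠ ⊤ := fun h => hfgx (by rw [h, EReal.top_add_of_ne_bot (hgnebot x)])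
    have hgx : g x ≠ ⊤ := fun h => hfgx (by rw [h, EReal.add_top_of_ne_bot (hfnebot x)])
    obtain ⟨a, ha⟩ : ∃ a : ℝ, f x = (a : EReal) := ⟨_, (EReal.coe_toReal hfx (hfnebot x)).symm⟩
    obtain ⟨b, hb⟩ : ∃ b : ℝ, g x = (b : EReal) := ⟨_, (EReal.coe_toReal hgx (hgnebot x)).symm⟩
    obtain ⟨c, hc⟩ : ∃ c : ℝ, f x₀ = (c : EReal) := ⟨_, (EReal.coe_toReal hx₀f (hfnebot x₀)).symm⟩
    obtain ⟨c', hc'⟩ : ∃ c' : ℝ, g x₀ = (c' : EReal) :=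
      ⟨_, (EReal.coe_toReal hx₀g (hgnebot x₀)).symm⟩
    -- Step 2: ball of continuity.
    have hnbhd : f ⁻¹' (Set.Iio ((c + 1 : ℝ) : EReal)) ∈ 𝓝 x₀ := by
      apply hfcont (isOpen_Iio.mem_nhds ?_)
      rw [Set.mem_Iio, hc]
      exact_mod_cast lt_add_one c
    obtain ⟨δ, hδ, hball⟩ := Metric.mem_nhds_iff.mp hnbhd
    have hballf : ∀ z : E, ‖z‖ < δ → f (x₀ + z) ≠ ⊤ ∧ (f (x₀ + z)).toReal ≤ c + 1 := by
      intro z hz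
      have hmem : x₀ + z ∈ Metric.ball x₀ δ := by
        rw [Metric.mem_ball, dist_eq_norm, add_sub_cancel_left]; exact hz
      have hlt : f (x₀ + z) < ((c + 1 : ℝ) : EReal) := hball hmem
      refine ⟨(hlt.trans (EReal.coe_lt_top _)).ne, ?_⟩
      have := EReal.toReal_le_toReal hlt.le (hfnebot _) (EReal.coe_ne_top _)
      rwa [EReal.toReal_coe] at this
    set v₀ := x₀ - x with hv₀def
    have hxv₀ : x + v₀ = x₀ := by rw [hv₀def]; abel
    -- The basic real-valued difference function.
    set ρ : E → E → ℝ := fun v w =>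
      (f (x + (v + w))).toReal - a - ξ w + (g (x + w)).toReal - b with hρdef
    set S : E → Set ℝ := fun v => {s | ∃ t : ℝ, 0 < t ∧ ∃ w : E,
      f (x + (t • v + w)) ≠ ⊤ ∧ g (x + w) ≠ ⊤ ∧ s = ρ (t • v) w / t} with hSdef
    have hmemS : ∀ (v : E) (t : ℝ) (w : E), 0 < t → f (x + (t • v + w)) ≠ ⊤ →
        g (x + w) ≠ ⊤ → ρ (t • v) w / t ∈ S v :=
      fun v t w ht h1 h2 => ⟨t, ht, w, h1, h2, rfl⟩
    -- The key convexity estimate.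
    have hKC : ∀ v₁ w₁ v₂ w₂ : E, f (x + (v₁ + w₁)) ≠ ⊤ → g (x + w₁) ≠ ⊤ →
        f (x + (v₂ + w₂)) ≠ ⊤ → g (x + w₂) ≠ ⊤ → ∀ l m : ℝ, 0 ≤ l → 0 ≤ m → l + m = 1 →
        f (x + ((l • v₁ + m • v₂) + (l • w₁ + m • w₂))) ≠ ⊤ ∧
          g (x + (l • w₁ + m • w₂)) ≠ ⊤ ∧
          ρ (l • v₁ + m • v₂) (l • w₁ + m • w₂) ≤ l * ρ v₁ w₁ + m * ρ v₂ w₂ := by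
      intro v₁ w₁ v₂ w₂ hf₁ hg₁ hf₂ hg₂ l m hl hm hlm
      have hx' : l • x + m • x = x := by rw [← add_smul, hlm, one_smul]
      have hcf := stmt9_real_convex f hfnebot hfconv hf₁ hf₂ hl hm hlm
      have hcg := stmt9_real_convex g hgnebot hgconv hg₁ hg₂ hl hm hlm
      have e1 : l • (x + (v₁ + w₁)) + m • (x + (v₂ + w₂)) =
          x + ((l • v₁ + m • v₂) + (l • w₁ + m • w₂)) := by
        calc l • (x + (v₁ + w₁)) + m • (x + (v₂ + w₂))
            = (l • x + m • x) + ((l • v₁ + m • v₂) + (l • w₁ + m • w₂)) := by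
              rw [smul_add, smul_add, smul_add, smul_add]; abel
          _ = x + ((l • v₁ + m • v₂) + (l • w₁ + m • w₂)) := by rw [hx']
      have e2 : l • (x + w₁) + m • (x + w₂) = x + (l • w₁ + m • w₂) := by
        calc l • (x + w₁) + m • (x + w₂)
            = (l • x + m • x) + (l • w₁ + m • w₂) := by
              rw [smul_add, smul_add]; abel
          _ = x + (l • w₁ + m • w₂) := by rw [hx']
      rw [e1] at hcf
      rw [e2] at hcg
      refine ⟨hcf.1, hcg.1, ?_⟩
      have hξ : ξ (l • w₁ + m • w₂) = l * ξ w₁ + m * ξ w₂ := by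
        rw [map_add, map_smul, map_smul]; rfl
      have h1 := hcf.2
      have h2 := hcg.2
      have haux1 : l * a + m * a = a := by rw [← add_mul, hlm, one_mul]
      have haux2 : l * b + m * b = b := by rw [← add_mul, hlm, one_mul]
      simp only [hρdef]
      rw [hξ]
      nlinarith [h1, h2]
    -- The subdifferential inequality in real form.
    have hH : ∀ w : E, f (x + w) ≠ ⊤ → g (x + w) ≠ ⊤ → 0 ≤ ρ 0 w := by
      intro w hfw hgw
      have h1 := H (x + w)
      rw [add_sub_cancel_left, ha, hb, ← EReal.coe_toReal hfw (hfnebot _),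
        ← EReal.coe_toReal hgw (hgnebot _), ← EReal.coe_add, ← EReal.coe_add,
        ← EReal.coe_add, EReal.coe_le_coe_iff] at h1
      simp only [hρdef, zero_add]
      linarith
    have hρ00 : ρ 0 0 = 0 := by
      simp only [hρdef, add_zero, ha, hb, EReal.toReal_coe, map_zero]
      ring
    have hf00 : f (x + ((0 : E) + 0)) ≠ ⊤ := by simpa using hfx
    have hg0 : g (x + (0 : E)) ≠ ⊤ := by simpa using hgx
    -- elements witnessing finiteness near x₀
    have hupper : ∀ v : E, ∃ t : ℝ, 0 < t ∧ f (x + (t • v + v₀)) ≠ ⊤ ∧ g (x + v₀) ≠ ⊤ ∧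
        ρ (t • v) v₀ ≤ c + 1 - a - ξ v₀ + c' - b ∧ t = δ / (2 * (‖v‖ + 1)) := by
      intro v
      have hden : 0 < 2 * (‖v‖ + 1) := by positivity
      refine ⟨δ / (2 * (‖v‖ + 1)), by positivity, ?_, ?_, ?_, rfl⟩
      all_goals
        have e : x + (((δ / (2 * (‖v‖ + 1))) • v) + v₀) = x₀ + (δ / (2 * (‖v‖ + 1))) • v := by
          rw [hv₀def]; abel
      · rw [e]
        refine (hballf _ ?_).1
        rw [norm_smul, Real.norm_eq_abs, abs_of_pos (by positivity)]
        rw [div_mul_eq_mul_div, div_lt_iff₀ hden]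
        nlinarith [norm_nonneg v, hδ]
      · rw [hxv₀]; exact hx₀g
      · have hnorm : ‖(δ / (2 * (‖v‖ + 1))) • v‖ < δ := by
          rw [norm_smul, Real.norm_eq_abs, abs_of_pos (by positivity)]
          rw [div_mul_eq_mul_div, div_lt_iff₀ hden]
          nlinarith [norm_nonneg v, hδ]
        have hf' := (hballf _ hnorm).2
        simp only [hρdef]
        rw [e, hxv₀, hc', EReal.toReal_coe]
        linarith
    have hSne : ∀ v : E, (S v).Nonempty := by
      intro v
      obtain ⟨t, ht, h1, h2, -, -⟩ := hupper v
      exact ⟨_, hmemS v t v₀ ht h1 h2⟩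
    -- lower bound
    have hlow : ∀ v : E, ∃ L : ℝ, ∀ s ∈ S v, L ≤ s := by
      intro v
      obtain ⟨t₂, ht₂, hf₂, hg₂, -, -⟩ := hupper (-v)
      refine ⟨-(ρ (t₂ • (-v)) v₀ / t₂), ?_⟩
      rintro s ⟨t, ht, w, hfw, hgw, rfl⟩
      have htt : 0 < t + t₂ := by linarith
      set l := t₂ / (t + t₂) with hldef
      set m := t / (t + t₂) with hmdef
      have hl : 0 < l := by positivity
      have hm : 0 < m := by positivity
      have hlm : l + m = 1 := by
        rw [hldef, hmdef, ← add_div, add_comm t₂ t, div_self htt.ne']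
      have hK := hKC (t • v) w (t₂ • (-v)) v₀ hfw hgw hf₂ hg₂ l m hl.le hm.le hlm
      have hzero : l • (t • v) + m • (t₂ • (-v)) = (0 : E) := by
        have e : l • (t • v) + m • (t₂ • (-v)) = (l * t - m * t₂) • v := by
          rw [smul_smul, smul_smul, smul_neg, sub_smul]; abel
        have e2 : l * t - m * t₂ = 0 := by
          rw [hldef, hmdef]; field_simp; ring
        rw [e, e2, zero_smul]
      rw [hzero, zero_add] at hK
      have h0 := hH _ hK.1 hK.2.1
      have h3 : 0 ≤ l * ρ (t • v) w + m * ρ (t₂ • (-v)) v₀ := h0.trans hK.2.2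
      have hl' : l * (t + t₂) = t₂ := by rw [hldef]; field_simp
      have hm' : m * (t + t₂) = t := by rw [hmdef]; field_simp
      have h4 : 0 ≤ t₂ * ρ (t • v) w + t * ρ (t₂ • (-v)) v₀ := by
        have h5 : 0 ≤ (l * ρ (t • v) w + m * ρ (t₂ • (-v)) v₀) * (t + t₂) :=
          mul_nonneg h3 htt.le
        calc (0:ℝ) ≤ (l * ρ (t • v) w + m * ρ (t₂ • (-v)) v₀) * (t + t₂) := h5
          _ = (l * (t + t₂)) * ρ (t • v) w + (m * (t + t₂)) * ρ (t₂ • (-v)) v₀ := by ring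
          _ = t₂ * ρ (t • v) w + t * ρ (t₂ • (-v)) v₀ := by rw [hl', hm']
      rw [← neg_div, div_le_div_iff₀ ht₂ ht]
      nlinarith [h4]
    have hbdd : ∀ v : E, BddBelow (S v) := fun v => (hlow v).imp (fun L hL => hL)
    set N : E → ℝ := fun v => sInf (S v) with hNdef
    have hNle : ∀ (v : E) (s : ℝ), s ∈ S v → N v ≤ s := fun v s hs => csInf_le (hbdd v) hs
    have hNge : ∀ (v : E) (L : ℝ), (∀ s ∈ S v, L ≤ s) → L ≤ N v :=
      fun v L hL => le_csInf (hSne v) hL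
    -- monotonicity of difference quotients
    have hmono : ∀ (v : E) (t t' : ℝ) (w' : E), 0 < t → t ≤ t' →
        f (x + (t' • v + w')) ≠ ⊤ → g (x + w') ≠ ⊤ →
        ∃ w : E, f (x + (t • v + w)) ≠ ⊤ ∧ g (x + w) ≠ ⊤ ∧
          ρ (t • v) w / t ≤ ρ (t' • v) w' / t' := by
      intro v t t' w' ht htt' hf' hg'
      have ht' : 0 < t' := lt_of_lt_of_le ht htt'
      set l := t / t' with hldef
      have hl0 : 0 < l := by positivity
      have hl1 : l ≤ 1 := by rw [hldef, div_le_one ht']; exact htt'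
      have hK := hKC (t' • v) w' 0 0 hf' hg' hf00 hg0 l (1 - l) hl0.le (by linarith) (by ring)
      have e : l • (t' • v) + (1 - l) • (0 : E) = t • v := by
        rw [smul_zero, add_zero, smul_smul]
        congr 1
        rw [hldef]; field_simp
      have e2 : l • w' + (1 - l) • (0 : E) = l • w' := by rw [smul_zero, add_zero]
      rw [e, e2] at hK
      refine ⟨l • w', hK.1, hK.2.1, ?_⟩
      have h2 := hK.2.2
      rw [hρ00, mul_zero, add_zero] at h2
      rw [div_le_div_iff₀ ht ht']
      have hlt' : l * t' = t := by rw [hldef]; field_simp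
      have h3 : (l * ρ (t' • v) w') * t' = ρ (t' • v) w' * t := by
        rw [← hlt']; ring
      nlinarith [mul_le_mul_of_nonneg_right h2 ht'.le]
    -- subadditivity
    have hsub : ∀ u v : E, N (u + v) ≤ N u + N v := by
      intro u v
      have key : ∀ s₁ ∈ S u, ∀ s₂ ∈ S v, N (u + v) ≤ s₁ + s₂ := by
        rintro s₁ ⟨t₁, ht₁, w₁, hfw₁, hgw₁, rfl⟩ s₂ ⟨t₂, ht₂, w₂, hfw₂, hgw₂, rfl⟩
        set t := min t₁ t₂ with htdef
        have ht : 0 < t := lt_min ht₁ ht₂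
        obtain ⟨w₁', hf₁', hg₁', h₁'⟩ := hmono u t t₁ w₁ ht (min_le_left _ _) hfw₁ hgw₁
        obtain ⟨w₂', hf₂', hg₂', h₂'⟩ := hmono v t t₂ w₂ ht (min_le_right _ _) hfw₂ hgw₂
        have hK := hKC (t • u) w₁' (t • v) w₂' hf₁' hg₁' hf₂' hg₂'
          (1/2) (1/2) (by norm_num) (by norm_num) (by norm_num)
        have e : (1/2 : ℝ) • (t • u) + (1/2 : ℝ) • (t • v) = ((1/2) * t) • (u + v) := by
          rw [smul_smul, smul_smul, ← smul_add]
        rw [e] at hK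
        have hmem := hmemS (u + v) ((1/2) * t) ((1/2 : ℝ) • w₁' + (1/2 : ℝ) • w₂')
          (by positivity) hK.1 hK.2.1
        have hN1 := hNle _ _ hmem
        have h3 := hK.2.2
        have hq : ρ (((1/2) * t) • (u + v)) ((1/2 : ℝ) • w₁' + (1/2 : ℝ) • w₂') / ((1/2) * t) ≤
            ρ (t • u) w₁' / t + ρ (t • v) w₂' / t := by
          rw [div_le_iff₀ (by positivity)]
          have expand : (ρ (t • u) w₁' / t + ρ (t • v) w₂' / t) * ((1/2) * t) =
              1/2 * ρ (t • u) w₁' + 1/2 * ρ (t • v) w₂' := by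
            field_simp
          rw [expand]
          exact h3
        linarith [hN1, hq, h₁', h₂']
      have step1 : ∀ s₂ ∈ S v, N (u + v) - s₂ ≤ N u := fun s₂ hs₂ =>
        hNge u _ (fun s₁ hs₁ => by linarith [key s₁ hs₁ s₂ hs₂])
      have step2 : N (u + v) - N u ≤ N v :=
        hNge v _ (fun s₂ hs₂ => by linarith [step1 s₂ hs₂])
      linarith
    -- positive homogeneity
    have hhomle : ∀ c₀ : ℝ, 0 < c₀ → ∀ v : E, N (c₀ • v) ≤ c₀ * N v := by
      intro c₀ hc₀ v
      have hstep : ∀ s ∈ S v, N (c₀ • v) ≤ c₀ * s := by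
        rintro s ⟨t, ht, w, hfw, hgw, rfl⟩
        have e : (t / c₀) • (c₀ • v) = t • v := by
          rw [smul_smul]
          congr 1
          field_simp
        have hmem := hmemS (c₀ • v) (t / c₀) w (by positivity) (by rw [e]; exact hfw) hgw
        have h1 := hNle _ _ hmem
        rw [e] at h1
        calc N (c₀ • v) ≤ ρ (t • v) w / (t / c₀) := h1
          _ = c₀ * (ρ (t • v) w / t) := by
            rw [div_div_eq_mul_div]
            ring
      have h2 : N (c₀ • v) / c₀ ≤ N v :=
        hNge v _ (fun s hs => by
          rw [div_le_iff₀ hc₀]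
          linarith [hstep s hs])
      rw [div_le_iff₀ hc₀] at h2
      linarith
    have hhom : ∀ c₀ : ℝ, 0 < c₀ → ∀ v : E, N (c₀ • v) = c₀ * N v := by
      intro c₀ hc₀ v
      have h1 := hhomle c₀ hc₀ v
      have h2 := hhomle c₀⁻¹ (by positivity) (c₀ • v)
      rw [inv_smul_smul₀ hc₀.ne' v] at h2
      have h3 := mul_le_mul_of_nonneg_left h2 hc₀.le
      rw [← mul_assoc, mul_inv_cancel₀ hc₀.ne', one_mul] at h3
      linarith
    have hN0 : 0 ≤ N 0 := by
      refine hNge 0 0 ?_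
      rintro s ⟨t, ht, w, hfw, hgw, rfl⟩
      simp only [smul_zero, zero_add] at hfw ⊢
      exact div_nonneg (hH w hfw hgw) ht.le
    -- Hahn–Banach
    obtain ⟨g₀, -, hg₀⟩ := exists_extension_of_le_sublinear ⟨⊥, 0⟩ N hhom hsub
      (fun p => by
        have hp : (p : E) = 0 := (Submodule.mem_bot ℝ).mp p.2
        show (0 : ℝ) ≤ N (p : E)
        rw [hp]
        exact hN0)
    -- continuity bound
    set C₂ : ℝ := max (c + 1 - a - ξ v₀ + c' - b) 0 with hC₂def
    have hC₂ : 0 ≤ C₂ := le_max_right _ _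
    have hNub : ∀ v : E, N v ≤ C₂ * (2 * (‖v‖ + 1) / δ) := by
      intro v
      obtain ⟨t, ht, hfT, hgT, hρle, htdef⟩ := hupper v
      have h1 := hNle v _ (hmemS v t v₀ ht hfT hgT)
      have hρle' : ρ (t • v) v₀ ≤ C₂ := hρle.trans (le_max_left _ _)
      calc N v ≤ ρ (t • v) v₀ / t := h1
        _ ≤ C₂ / t := by gcongr
        _ = C₂ * (2 * (‖v‖ + 1) / δ) := by
          have hd1 : δ ≠ 0 := hδ.ne'
          have hd2 : ‖v‖ + 1 ≠ 0 := by positivity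
          rw [htdef]
          field_simp
    have hbound1 : ∀ v : E, ‖v‖ = 1 → g₀ v ≤ C₂ * (4 / δ) := by
      intro v hv
      have h1 := (hg₀ v).trans (hNub v)
      rw [hv] at h1
      calc g₀ v ≤ C₂ * (2 * (1 + 1) / δ) := h1
        _ = C₂ * (4 / δ) := by norm_num
    have habs : ∀ v : E, ‖g₀ v‖ ≤ (C₂ * (4 / δ)) * ‖v‖ := by
      intro v
      rcases eq_or_ne v 0 with rfl | hv
      · simp
      · have hn : ‖v‖ ≠ 0 := norm_ne_zero_iff.mpr hv
        have hnpos : 0 < ‖v‖ := norm_pos_iff.mpr hv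
        set u := ‖v‖⁻¹ • v with hudef
        have hu : ‖u‖ = 1 := by
          rw [hudef, norm_smul, Real.norm_eq_abs, abs_inv, abs_of_pos hnpos,
            inv_mul_cancel₀ hn]
        have h1 : g₀ u ≤ C₂ * (4 / δ) := hbound1 u hu
        have h2 : g₀ (-u) ≤ C₂ * (4 / δ) := hbound1 (-u) (by rw [norm_neg]; exact hu)
        rw [map_neg] at h2
        have habs_u : |g₀ u| ≤ C₂ * (4 / δ) := abs_le.mpr ⟨by linarith, h1⟩
        have hv' : ‖v‖ • u = v := by
          rw [hudef, smul_smul, mul_inv_cancel₀ hn, one_smul]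
        calc ‖g₀ v‖ = |g₀ (‖v‖ • u)| := by rw [hv', Real.norm_eq_abs]
          _ = ‖v‖ * |g₀ u| := by
            rw [map_smul, smul_eq_mul, abs_mul, abs_of_nonneg (norm_nonneg v)]
          _ ≤ ‖v‖ * (C₂ * (4 / δ)) := mul_le_mul_of_nonneg_left habs_u (norm_nonneg v)
          _ = (C₂ * (4 / δ)) * ‖v‖ := mul_comm _ _
    set η : StrongDual ℝ E := LinearMap.mkContinuous g₀ (C₂ * (4 / δ)) habs with hηdef
    have hηapp : ∀ v : E, η v = g₀ v := fun v => rfl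
    refine ⟨η, ?_, ξ - η, ?_, by abel⟩
    · -- η ∈ ∂f(x)
      intro y
      by_cases hy : f y = ⊤
      · rw [hy]; exact le_top
      · have e : x + (y - x) = y := by abel
        have hfmem : f (x + ((1 : ℝ) • (y - x) + 0)) ≠ ⊤ := by
          rw [one_smul, add_zero, e]; exact hy
        have hgmem : g (x + (0 : E)) ≠ ⊤ := by rw [add_zero]; exact hgx
        have h1 := (hg₀ (y - x)).trans (hNle _ _ (hmemS (y - x) 1 0 one_pos hfmem hgmem))
        simp only [hρdef, one_smul, div_one, add_zero, map_zero, e, hb,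
          EReal.toReal_coe] at h1
        -- h1 : g₀ (y - x) ≤ (f y).toReal - a - 0 + b - b
        rw [ha, ← EReal.coe_toReal hy (hfnebot y), hηapp, ← EReal.coe_add,
          EReal.coe_le_coe_iff]
        linarith
    · -- ξ - η ∈ ∂g(x)
      intro y
      by_cases hy : g y = ⊤
      · rw [hy]; exact le_top
      · have e : x + (y - x) = y := by abel
        have hfmem : f (x + ((1 : ℝ) • (-(y - x)) + (y - x))) ≠ ⊤ := by
          rw [one_smul, neg_add_cancel, add_zero]; exact hfx
        have hgmem : g (x + (y - x)) ≠ ⊤ := by rw [e]; exact hy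
        have h1 := (hg₀ (-(y - x))).trans
          (hNle _ _ (hmemS (-(y - x)) 1 (y - x) one_pos hfmem hgmem))
        simp only [hρdef, one_smul, div_one, neg_add_cancel, add_zero, e, ha,
          EReal.toReal_coe, map_neg] at h1
        -- h1 : -g₀ (y - x) ≤ a - a - ξ (y - x) + (g y).toReal - b
        have happ : ((ξ - η) (y - x) : ℝ) = ξ (y - x) - g₀ (y - x) := by
          rw [ContinuousLinearMap.sub_apply, hηapp]
        rw [hb, ← EReal.coe_toReal hy (hgnebot y), happ, ← EReal.coe_add,
          EReal.coe_le_coe_iff]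
        linarith
  · -- easy direction
    rintro ⟨ξ₁, hξ₁, ξ₂, hξ₂, rfl⟩ y
    have h := add_le_add (hξ₁ y) (hξ₂ y)
    have hrw : f x + g x + (((ξ₁ + ξ₂) (y - x) : ℝ) : EReal)
        = (f x + ((ξ₁ (y - x) : ℝ) : EReal)) + (g x + ((ξ₂ (y - x) : ℝ) : EReal)) := by
      rw [ContinuousLinearMap.add_apply, EReal.coe_add]
      abel
    rw [hrw]
    exact h
end

section
/- Let E be a real reflexive Banach space, C a nonempty closed convex subset of E, and let h : C × C → (−∞,+∞] be a bifunction with h(x,x) = 0 for all x ∈ C satisfying: (A1) h is pseudomonotone; (A3) h is weakly continuous on C × C; (A4) h(x,·) is convex, lower semicontinuous and subdifferentiable on C for every x ∈ C; (A5) for each x, y, z ∈ C, limsup_{t↓0} h(tx + (1−t)y, z) ≤ h(y,z). Then EP(h) = DEP(h), and EP(h) is closed and convex. -/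
open Filter Topology Set Bornology

private lemma auxneg (a b : EReal) (ha : 0 < a) (hb : b < 0) : a * b < 0 := by
  have hnb : 0 < -b := by
    have h0 : (-0:EReal) < -b := EReal.neg_lt_neg_iff.mpr hb
    rwa [neg_zero] at h0
  have h1 : 0 < a * (-b) := EReal.mul_pos ha hnb
  rw [EReal.mul_comm, EReal.neg_mul, EReal.mul_comm] at h1
  have h0 : (-0:EReal) < -(a*b) := by rwa [neg_zero]
  exact EReal.neg_lt_neg_iff.mp h0

/-- Let `E` be a real reflexive Banach space, `C ⊆ E` nonempty closed convex,
and `h : C × C → (−∞,+∞]` a bifunction with `h(x,x) = 0` on `C` satisfying (A1)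
pseudomonotonicity, (A3) weak continuity on `C × C`, (A4) convexity, lower semicontinuity and
subdifferentiability of `h(x,·)` on `C`, and (A5) `limsup_{t↓0} h(tx+(1−t)y, z) ≤ h(y,z)`.
Then `EP(h) = DEP(h)` and `EP(h)` is closed and convex. -/
theorem stmt10 {E : Type*} [NormedAddCommGroup E] [NormedSpace ℝ E] [CompleteSpace E]
    (hrefl : Function.Surjective (NormedSpace.inclusionInDoubleDual ℝ E))
    (C : Set E) (hCne : C.Nonempty) (hCcl : IsClosed C) (hCconv : Convex ℝ C)
    (h : E → E → EReal)
    (hnebot : ∀ x ∈ C, ∀ y ∈ C, h x y ≠ ⊥)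
    (hdiag : ∀ x ∈ C, h x x = 0)
    -- (A1) pseudomonotone
    (hA1 : ∀ x ∈ C, ∀ y ∈ C, 0 ≤ h x y → h y x ≤ 0)
    -- (A3) weakly continuous on C × C
    (hA3 : ∀ (xs ys : ℕ → E) (x y : E), (∀ n, xs n ∈ C) → (∀ n, ys n ∈ C) →
      x ∈ C → y ∈ C →
      (∀ ξ : StrongDual ℝ E, Tendsto (fun n => ξ (xs n)) atTop (𝓝 (ξ x))) →
      (∀ ξ : StrongDual ℝ E, Tendsto (fun n => ξ (ys n)) atTop (𝓝 (ξ y))) →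
      Tendsto (fun n => h (xs n) (ys n)) atTop (𝓝 (h x y)))
    -- (A4) `h(x,·)` convex, lower semicontinuous and subdifferentiable on C
    (hA4conv : ∀ x ∈ C, ∀ u ∈ C, ∀ v ∈ C, ∀ a b : ℝ, 0 ≤ a → 0 ≤ b → a + b = 1 →
      h x (a • u + b • v) ≤ (a : EReal) * h x u + (b : EReal) * h x v)
    (hA4lsc : ∀ x ∈ C, LowerSemicontinuousOn (h x) C)
    (hA4sub : ∀ x ∈ C, ∀ y ∈ C,
      Set.Nonempty {ξ : StrongDual ℝ E | ∀ z ∈ C,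
        h x y + ((ξ (z - y) : ℝ) : EReal) ≤ h x z})
    -- (A5)
    (hA5 : ∀ x ∈ C, ∀ y ∈ C, ∀ z ∈ C,
      Filter.limsup (fun t : ℝ => h (t • x + (1 - t) • y) z) (𝓝[>] (0 : ℝ)) ≤ h y z) :
    {x ∈ C | ∀ y ∈ C, 0 ≤ h x y} = {y ∈ C | ∀ x ∈ C, h x y ≤ 0} ∧
    IsClosed {x ∈ C | ∀ y ∈ C, 0 ≤ h x y} ∧
    Convex ℝ {x ∈ C | ∀ y ∈ C, 0 ≤ h x y} := by
  -- EP = DEP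
  have hEQ : {x ∈ C | ∀ y ∈ C, 0 ≤ h x y} = {y ∈ C | ∀ x ∈ C, h x y ≤ 0} := by
    ext z
    simp only [Set.mem_setOf_eq]
    constructor
    · rintro ⟨hz, hz2⟩
      exact ⟨hz, fun x hx => hA1 z hz x hx (hz2 x hx)⟩
    · rintro ⟨hz, hz2⟩
      refine ⟨hz, fun y hy => ?_⟩
      -- Minty-type argument
      have key : ∀ t ∈ Set.Ioo (0:ℝ) 1, 0 ≤ h (t • y + (1-t) • z) y := by
        intro t ht
        set xt := t • y + (1-t) • z with hxt
        have hxtC : xt ∈ C := hCconv hy hz (le_of_lt ht.1) (by linarith [ht.2]) (by ring)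
        have h0 : (0:EReal) ≤ (t:EReal) * h xt y + ((1-t:ℝ):EReal) * h xt z := by
          have hc := hA4conv xt hxtC y hy z hz t (1-t) (le_of_lt ht.1) (by linarith [ht.2])
            (by ring)
          rw [← hxt, hdiag xt hxtC] at hc
          exact hc
        have h2 : ((1-t:ℝ):EReal) * h xt z ≤ 0 :=
          mul_nonpos_of_nonneg_of_nonpos (by exact_mod_cast (by linarith [ht.2] : (0:ℝ) ≤ 1-t))
            (hz2 xt hxtC)
        have h3 : (0:EReal) ≤ (t:EReal) * h xt y := by
          calc (0:EReal) ≤ (t:EReal) * h xt y + ((1-t:ℝ):EReal) * h xt z := h0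
            _ ≤ (t:EReal) * h xt y + 0 := add_le_add (le_refl _) h2
            _ = (t:EReal) * h xt y := add_zero _
        by_contra hlt
        rw [not_le] at hlt
        exact absurd h3 (not_le.mpr (auxneg _ _ (by exact_mod_cast ht.1) hlt))
      have hev : ∀ᶠ t : ℝ in 𝓝[>] (0:ℝ), 0 ≤ h (t • y + (1-t) • z) y := by
        filter_upwards [Ioo_mem_nhdsGT_of_mem (by norm_num : (0:ℝ) ∈ Set.Ico (0:ℝ) 1)]
          with t ht using key t ht
      have hls : (0:EReal) ≤ Filter.limsup (fun t : ℝ => h (t • y + (1-t) • z) y)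
          (𝓝[>] (0:ℝ)) := by
        have := Filter.limsup_le_limsup (u := fun _ : ℝ => (0:EReal))
          (v := fun t : ℝ => h (t • y + (1-t) • z) y) hev
        simpa [Filter.limsup_const] using this
      exact le_trans hls (hA5 y hy z hz y hy)
  -- DEP is closed
  have hsub : {y ∈ C | ∀ x ∈ C, h x y ≤ 0} ⊆ C := fun w hw => hw.1
  have hDEPcl : IsClosed {y ∈ C | ∀ x ∈ C, h x y ≤ 0} := by
    refine isClosed_of_closure_subset fun z hzcl => ?_
    have hzC : z ∈ C := hCcl.closure_subset ((closure_mono hsub) hzcl)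
    refine ⟨hzC, fun x hx => ?_⟩
    by_contra hpos
    rw [not_le] at hpos
    have hlsc := hA4lsc x hx z hzC
    have hev : ∀ᶠ w in 𝓝[C] z, 0 < h x w := hlsc 0 hpos
    have hev' : ∀ᶠ w in 𝓝[{y ∈ C | ∀ x ∈ C, h x y ≤ 0}] z, 0 < h x w :=
      hev.filter_mono (nhdsWithin_mono z hsub)
    have hne : (𝓝[{y ∈ C | ∀ x ∈ C, h x y ≤ 0}] z).NeBot :=
      mem_closure_iff_nhdsWithin_neBot.mp hzcl
    have hmem : ∀ᶠ w in 𝓝[{y ∈ C | ∀ x ∈ C, h x y ≤ 0}] z,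
        w ∈ {y ∈ C | ∀ x ∈ C, h x y ≤ 0} := eventually_mem_nhdsWithin
    obtain ⟨w, hw1, hw2⟩ := (hev'.and hmem).exists
    exact absurd (hw2.2 x hx) (not_le.mpr hw1)
  -- DEP is convex
  have hDEPconv : Convex ℝ {y ∈ C | ∀ x ∈ C, h x y ≤ 0} := by
    intro u hu v hv a b ha hb hab
    refine ⟨hCconv hu.1 hv.1 ha hb hab, fun x hx => ?_⟩
    calc h x (a • u + b • v) ≤ (a:EReal) * h x u + (b:EReal) * h x v :=
          hA4conv x hx u hu.1 v hv.1 a b ha hb hab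
      _ ≤ 0 + 0 := add_le_add
          (mul_nonpos_of_nonneg_of_nonpos (by exact_mod_cast ha) (hu.2 x hx))
          (mul_nonpos_of_nonneg_of_nonpos (by exact_mod_cast hb) (hv.2 x hx))
      _ = 0 := add_zero _
  exact ⟨hEQ, by rw [hEQ]; exact hDEPcl, by rw [hEQ]; exact hDEPconv⟩
end

section
/- Let C be a nonempty closed convex subset of a real reflexive Banach space E and let f : E → ℝ be a Legendre and strongly coercive function. Let h : C × C → ℝ be a bifunction with h(x,x) = 0 for all x ∈ C which is pseudomonotone, Bregman–Lipschitz-type continuous with coefficients c₁, c₂ with respect to f, weakly continuous on C × C, and such that h(x,·) is convex, lower semicontinuous and subdifferentiable on C for every x ∈ C. For arbitrary sequences {x_n} ⊆ C and {α_n} ⊆ (0,+∞), define t_n = argmin{α_n h(x_n, u) + D_f(u, x_n) : u ∈ C} and v_n = argmin{α_n h(t_n, u) + D_f(u, x_n) : u ∈ C}. Then for all x* ∈ EP(h): D_f(x*, v_n) ≤ D_f(x*, x_n) − (1 − α_n c₁) D_f(t_n, x_n) − (1 − α_n c₂) D_f(v_n, t_n). -/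
open Filter Topology Set Bornology

/-- Three-point identity for the Bregman distance (pure algebra). -/
lemma bregman_three_point {E : Type*} [NormedAddCommGroup E] [NormedSpace ℝ E]
    (f : E → ℝ) (f' : E → StrongDual ℝ E) (u v x : E) :
    BregmanDist f f' u v + BregmanDist f f' v x - BregmanDist f f' u x =
      f' x (u - v) - f' v (u - v) := by
  have h1 : f' x (u - x) = f' x (u - v) + f' x (v - x) := by
    rw [← map_add]; congr 1; abel
  simp only [BregmanDist]
  linarith

/-- Variational inequality at a constrained minimizer of `u ↦ a·g(u) + D_f(u,p)`. -/
lemma bregman_min_ineq {E : Type*} [NormedAddCommGroup E] [NormedSpace ℝ E]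
    (C : Set E) (hCconv : Convex ℝ C)
    (f : E → ℝ) (f' : E → StrongDual ℝ E)
    (hgrad : ∀ x y : E,
      Tendsto (fun t : ℝ => (f (x + t • y) - f x) / t) (𝓝[>] (0 : ℝ)) (𝓝 (f' x y)))
    (g : E → ℝ) (hg : ConvexOn ℝ C g)
    (a : ℝ) (ha : 0 ≤ a) (p m : E) (hm : m ∈ C)
    (hmin : ∀ u ∈ C, a * g m + BregmanDist f f' m p ≤ a * g u + BregmanDist f f' u p) :
    ∀ u ∈ C, f' p (u - m) - f' m (u - m) ≤ a * (g u - g m) := by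
  intro u hu
  have key : ∀ s ∈ Set.Ioc (0:ℝ) 1,
      f' p (u - m) - (f (m + s • (u - m)) - f m) / s ≤ a * (g u - g m) := by
    intro s hs
    have hs0 : (0:ℝ) < s := hs.1
    have hmem : m + s • (u - m) ∈ C := by
      have := hCconv hm hu (by linarith [hs.2] : (0:ℝ) ≤ 1 - s) hs0.le (by ring)
      have heq : (1 - s) • m + s • u = m + s • (u - m) := by
        rw [smul_sub, sub_smul, one_smul]; abel
      rwa [heq] at this
    have hconvg : g (m + s • (u - m)) ≤ (1 - s) * g m + s * g u := by
      have := hg.2 hm hu (by linarith [hs.2] : (0:ℝ) ≤ 1 - s) hs0.le (by ring)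
      have heq : (1 - s) • m + s • u = m + s • (u - m) := by
        rw [smul_sub, sub_smul, one_smul]; abel
      rwa [heq, smul_eq_mul, smul_eq_mul] at this
    have hlin : f' p (m + s • (u - m) - p) = f' p (m - p) + s * f' p (u - m) := by
      have heq : m + s • (u - m) - p = (m - p) + s • (u - m) := by abel
      rw [heq, map_add, map_smul]; rfl
    have hm1 := hmin (m + s • (u - m)) hmem
    simp only [BregmanDist] at hm1
    rw [hlin] at hm1
    have h2 : (f' p (u - m) - a * (g u - g m)) * s ≤ f (m + s • (u - m)) - f m := by
      nlinarith [mul_le_mul_of_nonneg_left hconvg ha]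
    have h3 := (le_div_iff₀ hs0).2 h2
    linarith
  have htend : Tendsto (fun s : ℝ => f' p (u - m) - (f (m + s • (u - m)) - f m) / s)
      (𝓝[>] (0:ℝ)) (𝓝 (f' p (u - m) - f' m (u - m))) :=
    tendsto_const_nhds.sub (hgrad m (u - m))
  exact le_of_tendsto htend
    (Filter.eventually_of_mem (Ioc_mem_nhdsGT_of_mem ⟨le_refl 0, one_pos⟩) key)

/-- Let `C` be a nonempty closed convex subset of a real reflexive Banach
space `E` and `f : E → ℝ` a Legendre and strongly coercive function.  Let `h : C × C → ℝ` be a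
bifunction with `h(x,x) = 0` which is pseudomonotone, Bregman–Lipschitz-type continuous with
coefficients `c₁, c₂` w.r.t. `f`, weakly continuous on `C × C`, and such that `h(x,·)` is
convex, lower semicontinuous and subdifferentiable on `C`.  For sequences `{x_n} ⊆ C` and
`{α_n} ⊆ (0,∞)`, let `t_n = argmin {α_n h(x_n,u) + D_f(u,x_n) : u ∈ C}` and
`v_n = argmin {α_n h(t_n,u) + D_f(u,x_n) : u ∈ C}`.  Then for all `x* ∈ EP(h)`,
`D_f(x*,v_n) ≤ D_f(x*,x_n) − (1 − α_n c₁) D_f(t_n,x_n) − (1 − α_n c₂) D_f(v_n,t_n)`. -/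

theorem stmt12 {E : Type*} [NormedAddCommGroup E] [NormedSpace ℝ E] [CompleteSpace E]
    (hrefl : Function.Surjective (NormedSpace.inclusionInDoubleDual ℝ E))
    (C : Set E) (hCne : C.Nonempty) (hCcl : IsClosed C) (hCconv : Convex ℝ C)
    (f : E → ℝ) (hconv : ConvexOn ℝ Set.univ f)
    (f' : E → StrongDual ℝ E)
    (hgrad : ∀ x y : E,
      Tendsto (fun t : ℝ => (f (x + t • y) - f x) / t) (𝓝[>] (0 : ℝ)) (𝓝 (f' x y)))
    -- the Fenchel conjugate of `f`, and the Legendre conditions (L1), (L2)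
    (fstar : StrongDual ℝ E → EReal)
    (hfstar : ∀ ξ : StrongDual ℝ E, fstar ξ = ⨆ x : E, ((ξ x - f x : ℝ) : EReal))
    (hL1 : (interior (Set.univ : Set E)).Nonempty ∧
      ∀ x : E, Set.Subsingleton
        {ξ : StrongDual ℝ E | ∀ y : E, f x + ξ (y - x) ≤ f y})
    (hL2 : (interior {ξ : StrongDual ℝ E | fstar ξ ≠ ⊤}).Nonempty ∧
      ∀ ξ : StrongDual ℝ E, Set.Subsingleton
        {Λ : StrongDual ℝ (StrongDual ℝ E) |
          ∀ η : StrongDual ℝ E, fstar ξ + ((Λ (η - ξ) : ℝ) : EReal) ≤ fstar η})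
    -- strong coercivity of `f`
    (hcoercive : ∀ M : ℝ, ∃ R : ℝ, ∀ x : E, R ≤ ‖x‖ → M ≤ f x / ‖x‖)
    -- the bifunction `h`
    (h : E → E → ℝ)
    (hdiag : ∀ x ∈ C, h x x = 0)
    (hpseudo : ∀ x ∈ C, ∀ y ∈ C, 0 ≤ h x y → h y x ≤ 0)
    (c₁ c₂ : ℝ) (hc₁ : 0 < c₁) (hc₂ : 0 < c₂)
    (hBLip : ∀ x ∈ C, ∀ y ∈ C, ∀ z ∈ C,
      h x z - c₁ * BregmanDist f f' y x - c₂ * BregmanDist f f' z y ≤ h x y + h y z)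
    (hweakcont : ∀ (xs ys : ℕ → E) (x y : E), (∀ n, xs n ∈ C) → (∀ n, ys n ∈ C) →
      x ∈ C → y ∈ C →
      (∀ ξ : StrongDual ℝ E, Tendsto (fun n => ξ (xs n)) atTop (𝓝 (ξ x))) →
      (∀ ξ : StrongDual ℝ E, Tendsto (fun n => ξ (ys n)) atTop (𝓝 (ξ y))) →
      Tendsto (fun n => h (xs n) (ys n)) atTop (𝓝 (h x y)))
    (hconvh : ∀ x ∈ C, ConvexOn ℝ C (h x))
    (hlsch : ∀ x ∈ C, LowerSemicontinuousOn (h x) C)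
    (hsubh : ∀ x ∈ C, ∀ y ∈ C,
      Set.Nonempty {ξ : StrongDual ℝ E | ∀ z ∈ C, h x y + ξ (z - y) ≤ h x z})
    -- the sequences
    (x : ℕ → E) (hx : ∀ n, x n ∈ C)
    (α : ℕ → ℝ) (hα : ∀ n, 0 < α n)
    (t v : ℕ → E)
    (ht : ∀ n, t n ∈ C ∧ ∀ u ∈ C,
      α n * h (x n) (t n) + BregmanDist f f' (t n) (x n) ≤
      α n * h (x n) u + BregmanDist f f' u (x n))
    (hv : ∀ n, v n ∈ C ∧ ∀ u ∈ C,
      α n * h (t n) (v n) + BregmanDist f f' (v n) (x n) ≤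
      α n * h (t n) u + BregmanDist f f' u (x n)) :
    ∀ xstar : E, xstar ∈ C → (∀ y ∈ C, 0 ≤ h xstar y) → ∀ n : ℕ,
      BregmanDist f f' xstar (v n) ≤
        BregmanDist f f' xstar (x n)
          - (1 - α n * c₁) * BregmanDist f f' (t n) (x n)
          - (1 - α n * c₂) * BregmanDist f f' (v n) (t n) := by
  intro xstar hxC hEP n
  obtain ⟨htC, htmin⟩ := ht n
  obtain ⟨hvC, hvmin⟩ := hv n
  have ineq1 := bregman_min_ineq C hCconv f f' hgrad (h (x n)) (hconvh (x n) (hx n))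
    (α n) (hα n).le (x n) (t n) htC htmin (v n) hvC
  have ineq2 := bregman_min_ineq C hCconv f f' hgrad (h (t n)) (hconvh (t n) htC)
    (α n) (hα n).le (x n) (v n) hvC hvmin xstar hxC
  have hts : h (t n) xstar ≤ 0 := hpseudo xstar hxC (t n) htC (hEP (t n) htC)
  have hBL := hBLip (x n) (hx n) (t n) htC (v n) hvC
  have tp1 := bregman_three_point f f' (v n) (t n) (x n)
  have tp2 := bregman_three_point f f' xstar (v n) (x n)
  have hαts : α n * h (t n) xstar ≤ 0 :=
    mul_nonpos_of_nonneg_of_nonpos (hα n).le hts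
  have hαBL := mul_le_mul_of_nonneg_left hBL (hα n).le
  nlinarith [hαBL, ineq1, ineq2, hαts, tp1, tp2]
end

section
/- Let E be a real reflexive Banach space, let f : E → ℝ be a Gâteaux differentiable convex function, and let A : E → 2^{E*} be a maximal monotone operator such that A⁻¹0 ≠ ∅. Then for all r > 0, q ∈ A⁻¹0 and x ∈ E, D_f(q, x) ≥ D_f(q, Res^f_{rA}(x)) + D_f(Res^f_{rA}(x), x), where Res^f_{rA}(x) = (∇f + rA)⁻¹(∇f(x)) is the resolvent of rA with respect to f. -/
open Filter Topology Set Bornology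

/-- A multi-valued operator `A : E → 2^{E*}` is monotone. -/
def IsMonotoneOp {E : Type*} [NormedAddCommGroup E] [NormedSpace ℝ E]
    (A : E → Set (StrongDual ℝ E)) : Prop :=
  ∀ x y : E, ∀ u ∈ A x, ∀ v ∈ A y, 0 ≤ (u - v) (x - y)

/-- A monotone operator is maximal monotone if its graph is not properly contained in the
graph of any monotone operator on `E`. -/
def IsMaximalMonotoneOp {E : Type*} [NormedAddCommGroup E] [NormedSpace ℝ E]
    (A : E → Set (StrongDual ℝ E)) : Prop :=
  IsMonotoneOp A ∧
  ∀ B : E → Set (StrongDual ℝ E), IsMonotoneOp B → (∀ x, A x ⊆ B x) → ∀ x, B x ⊆ A x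

/-- Let `E` be a real reflexive Banach space, `f : E → ℝ` a Gâteaux
differentiable convex function and `A : E → 2^{E*}` a maximal monotone operator with
`A⁻¹0 ≠ ∅`.  Then for all `r > 0`, `q ∈ A⁻¹0` and `x ∈ E`,
`D_f(q,x) ≥ D_f(q, Res^f_{rA}(x)) + D_f(Res^f_{rA}(x), x)`, where the resolvent satisfies
`∇f(x) ∈ ∇f(Res^f_{rA}(x)) + r A(Res^f_{rA}(x))`. -/
theorem stmt16 {E : Type*} [NormedAddCommGroup E] [NormedSpace ℝ E] [CompleteSpace E]
    (hrefl : Function.Surjective (NormedSpace.inclusionInDoubleDual ℝ E))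
    (f : E → ℝ) (hconv : ConvexOn ℝ Set.univ f)
    (f' : E → StrongDual ℝ E)
    (hgrad : ∀ x y : E,
      Tendsto (fun t : ℝ => (f (x + t • y) - f x) / t) (𝓝[>] (0 : ℝ)) (𝓝 (f' x y)))
    (A : E → Set (StrongDual ℝ E))
    (hA : IsMaximalMonotoneOp A)
    (hA0 : ∃ q : E, (0 : StrongDual ℝ E) ∈ A q)
    -- the resolvent `Res^f_{rA}` of `rA` with respect to `f`
    (Res : ℝ → E → E)
    (hRes : ∀ r : ℝ, 0 < r → ∀ x : E,
      ∃ ξ ∈ A (Res r x), f' x = f' (Res r x) + r • ξ) :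
    ∀ r : ℝ, 0 < r → ∀ q : E, (0 : StrongDual ℝ E) ∈ A q → ∀ x : E,
      BregmanDist f f' q (Res r x) + BregmanDist f f' (Res r x) x ≤
        BregmanDist f f' q x := by
  intro r hr q hq x
  obtain ⟨ξ, hξ, heq⟩ := hRes r hr x
  set z := Res r x with hz
  have hmono := hA.1 z q ξ hξ 0 hq
  simp only [sub_zero] at hmono
  have hxi : 0 ≤ r * ξ (z - q) := mul_nonneg hr.le hmono
  have h1 : f' x (q - x) = f' z (q - x) + r * ξ (q - x) := by
    rw [heq]; simp
  have h2 : f' x (z - x) = f' z (z - x) + r * ξ (z - x) := by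
    rw [heq]; simp
  have h3 : ξ (z - q) = ξ (z - x) - ξ (q - x) := by
    rw [← map_sub]; congr 1; abel
  have h4 : f' z (q - z) = f' z (q - x) - f' z (z - x) := by
    rw [← map_sub]; congr 1; abel
  simp only [BregmanDist]
  nlinarith [hxi, h1, h2, h3, h4]
end
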